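/- arXiv:2204.13305 — 9 statements merged into one kernel-verified Lean document; each statement's English description precedes it below -/
import Mathlib

section
/- For every i ∈ {1,2,3,4}, the class of well-formed CAFs is a proper subclass of Image_i, and Image_i is a proper subclass of the class of all CAFs: wfCAF ⊊ Image_i ⊊ CAF. -/
/-- A claim-augmented argumentation framework (CAF): a finite set of arguments,
an attack relation between the arguments, and a claim function assigning
a claim to each argument.  Arguments and claims are drawn from `ℕ`. -/
structure CAF where
  args : Finset ℕ
  att : Set (ℕ × ℕ)
  claim : ℕ → ℕ
  att_dom : ∀ p ∈ att, p.1 ∈ args ∧ p.2 ∈ args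

namespace CAF

/-- A CAF is well-formed if arguments with the same claim attack the same arguments. -/
def wf (F : CAF) : Prop :=
  ∀ a ∈ F.args, ∀ b ∈ F.args, F.claim a = F.claim b →
    ∀ c, ((a, c) ∈ F.att ↔ (b, c) ∈ F.att)

/-- `S` attacks the argument `b` in `F`. -/
def attacks (F : CAF) (S : Set ℕ) (b : ℕ) : Prop := ∃ a ∈ S, (a, b) ∈ F.att

/-- The argument `a` is defended by `S` in `F`. -/
def defends (F : CAF) (S : Set ℕ) (a : ℕ) : Prop :=
  ∀ b, (b, a) ∈ F.att → F.attacks S b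

/-- The range `S⊕` of `S` in `F`. -/
def range (F : CAF) (S : Set ℕ) : Set ℕ := S ∪ {b | F.attacks S b}

/-- Conflict-free sets. -/
def cf (F : CAF) (S : Set ℕ) : Prop :=
  S ⊆ ↑F.args ∧ ∀ a ∈ S, ∀ b ∈ S, (a, b) ∉ F.att

/-- Admissible sets. -/
def adm (F : CAF) (S : Set ℕ) : Prop :=
  F.cf S ∧ ∀ a ∈ S, F.defends S a

/-- Complete extensions. -/
def com (F : CAF) (S : Set ℕ) : Prop :=
  F.adm S ∧ ∀ a ∈ F.args, F.defends S a → a ∈ S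

/-- Naive extensions: ⊆-maximal conflict-free sets. -/
def naive (F : CAF) (S : Set ℕ) : Prop :=
  F.cf S ∧ ¬ ∃ T, F.cf T ∧ S ⊂ T

/-- Stable extensions. -/
def stb (F : CAF) (S : Set ℕ) : Prop :=
  F.cf S ∧ ∀ a ∈ F.args, a ∉ S → F.attacks S a

/-- Preferred extensions: ⊆-maximal admissible sets. -/
def prf (F : CAF) (S : Set ℕ) : Prop :=
  F.adm S ∧ ¬ ∃ T, F.adm T ∧ S ⊂ T

/-- Semi-stable extensions: admissible sets with ⊆-maximal range among admissible sets. -/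
def sem (F : CAF) (S : Set ℕ) : Prop :=
  F.adm S ∧ ¬ ∃ T, F.adm T ∧ F.range S ⊂ F.range T

/-- Stage extensions: conflict-free sets with ⊆-maximal range among conflict-free sets. -/
def stg (F : CAF) (S : Set ℕ) : Prop :=
  F.cf S ∧ ¬ ∃ T, F.cf T ∧ F.range S ⊂ F.range T

/-- The claim-based variant `σ_c` of a semantics `σ`. -/
def claimSem (σ : CAF → Set ℕ → Prop) (F : CAF) : Set (Set ℕ) :=
  {C | ∃ S, σ F S ∧ F.claim '' S = C}

/-- The wf-problematic part of a CAF: the pairs of arguments `(a,b)` such that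
`(a,b)` is not an attack but some argument `a'` with the same claim as `a` attacks `b`. -/
def wfp (F : CAF) : Set (ℕ × ℕ) :=
  {p | p.1 ∈ F.args ∧ p.2 ∈ F.args ∧ p ∉ F.att ∧
       ∃ a' ∈ F.args, F.claim a' = F.claim p.1 ∧ (a', p.2) ∈ F.att}

end CAF

/-- A preference-based CAF (PCAF): a well-formed CAF together with an
asymmetric preference relation over its arguments. -/
structure PCAF extends CAF where
  pref : ℕ → ℕ → Prop
  pref_dom : ∀ a b, pref a b → a ∈ args ∧ b ∈ args
  pref_asymm : ∀ a b, pref a b → ¬ pref b a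
  isWf : toCAF.wf

/-- The attack relation obtained from a PCAF by Reduction `i` (`i ∈ {1,2,3,4}`). -/
def redAtt (i : ℕ) (F : PCAF) : Set (ℕ × ℕ) :=
  if i = 1 then {p | p ∈ F.att ∧ ¬ F.pref p.2 p.1}
  else if i = 2 then
    {p | (p ∈ F.att ∧ ¬ F.pref p.2 p.1) ∨
         ((p.2, p.1) ∈ F.att ∧ p ∉ F.att ∧ F.pref p.1 p.2)}
  else if i = 3 then
    {p | (p ∈ F.att ∧ ¬ F.pref p.2 p.1) ∨ (p ∈ F.att ∧ (p.2, p.1) ∉ F.att)}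
  else if i = 4 then
    {p | (p ∈ F.att ∧ ¬ F.pref p.2 p.1) ∨
         ((p.2, p.1) ∈ F.att ∧ p ∉ F.att ∧ F.pref p.1 p.2) ∨
         (p ∈ F.att ∧ (p.2, p.1) ∉ F.att)}
  else ∅

/-- The CAF `Red_i(F)` obtained from the PCAF `F` by Reduction `i`. -/
def Red (i : ℕ) (F : PCAF) : CAF where
  args := F.args
  att := redAtt i F
  claim := F.claim
  att_dom := by
    intro p hp
    unfold redAtt at hp
    split_ifs at hp
    · simp only [Set.mem_setOf_eq] at hp
      exact F.att_dom p hp.1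
    · simp only [Set.mem_setOf_eq] at hp
      rcases hp with ⟨h, -⟩ | ⟨h, -, -⟩
      · exact F.att_dom p h
      · exact ⟨(F.att_dom _ h).2, (F.att_dom _ h).1⟩
    · simp only [Set.mem_setOf_eq] at hp
      rcases hp with ⟨h, -⟩ | ⟨h, -⟩ <;> exact F.att_dom p h
    · simp only [Set.mem_setOf_eq] at hp
      rcases hp with ⟨h, -⟩ | ⟨h, -, -⟩ | ⟨h, -⟩
      · exact F.att_dom p h
      · exact ⟨(F.att_dom _ h).2, (F.att_dom _ h).1⟩
      · exact F.att_dom p h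
    · exact absurd hp (Set.notMem_empty p)

/-- `Image_i`: the class of CAFs obtainable by applying Reduction `i` to a PCAF. -/
def ImageI (i : ℕ) : Set CAF := {F | ∃ G : PCAF, Red i G = F}

/-- `ImageTrans_i`: the class of CAFs obtainable by applying Reduction `i`
to a PCAF with a transitive preference relation. -/
def ImageTransI (i : ℕ) : Set CAF :=
  {F | ∃ G : PCAF, Transitive G.pref ∧ Red i G = F}

/-- The class of well-formed CAFs. -/
def wfCAFs : Set CAF := {F | F.wf}

/-- The preference-claim-based variant `σ_p^i` of a semantics `σ`. -/
def prefSem (σ : CAF → Set ℕ → Prop) (i : ℕ) (F : PCAF) : Set (Set ℕ) :=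
  CAF.claimSem σ (Red i F)

/-- `E_0(C)`: all arguments of `F` with a claim in `C`. -/
def E0 (F : PCAF) (C : Set ℕ) : Set ℕ := {a | a ∈ F.args ∧ F.claim a ∈ C}

/-- `E_1^i(C)`: the arguments of `E_0(C)` not attacked by `E_0(C)` in the
underlying AF of `F` (this set does not depend on `i`). -/
def E1 (F : PCAF) (C : Set ℕ) : Set ℕ :=
  E0 F C \ {b | ∃ a ∈ E0 F C, (a, b) ∈ F.att}

/-- The sequence `E_k^i(C)`. -/
def Ek (F : PCAF) (i : ℕ) (C : Set ℕ) : ℕ → Set ℕ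
  | 0 => E0 F C
  | 1 => E1 F C
  | (k + 2) => {x | x ∈ Ek F i C (k + 1) ∧ (Red i F).defends (Ek F i C (k + 1)) x}

/-- `E_*^i(C)`: the fixed point of the sequence `E_k^i(C)` (reached after at
most `|A|` steps, since the sequence is ⊆-decreasing from index 1 on). -/
def Estar (F : PCAF) (i : ℕ) (C : Set ℕ) : Set ℕ := Ek F i C (F.args.card + 2)

section Aux

lemma CAF.ext' {F G : CAF} (h1 : F.args = G.args) (h2 : F.att = G.att)
    (h3 : F.claim = G.claim) : F = G := by
  cases F; cases G; simp_all

/-- Embedding of a wf CAF as a PCAF with empty preference. -/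
def trivPCAF (F : CAF) (h : F.wf) : PCAF where
  toCAF := F
  pref := fun _ _ => False
  pref_dom := by intro a b hb; exact hb.elim
  pref_asymm := by intro a b hb; exact hb.elim
  isWf := h

lemma red_triv (i : ℕ) (hi : i ∈ ({1, 2, 3, 4} : Set ℕ)) (F : CAF) (h : F.wf) :
    Red i (trivPCAF F h) = F := by
  refine CAF.ext' rfl ?_ rfl
  show redAtt i (trivPCAF F h) = F.att
  simp only [Set.mem_insert_iff, Set.mem_singleton_iff] at hi
  rcases hi with rfl | rfl | rfl | rfl <;>
    · ext p
      simp [redAtt, trivPCAF]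
      try tauto

lemma wf_sub_image (i : ℕ) (hi : i ∈ ({1, 2, 3, 4} : Set ℕ)) :
    wfCAFs ⊆ ImageI i := by
  intro F hF
  exact ⟨trivPCAF F hF, red_triv i hi F hF⟩

/-- Example PCAF whose reductions are not well-formed. -/
def exPCAF : PCAF where
  args := {0, 1, 2}
  att := {(0, 2), (1, 2), (2, 0), (2, 1)}
  claim := fun n => if n = 2 then 1 else 0
  att_dom := by
    intro p hp
    simp only [Set.mem_insert_iff, Set.mem_singleton_iff] at hp
    rcases hp with rfl | rfl | rfl | rfl <;> simp
  pref := fun a b => a = 2 ∧ b = 0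
  pref_dom := by rintro a b ⟨rfl, rfl⟩; simp
  pref_asymm := by rintro a b ⟨rfl, rfl⟩ ⟨h, _⟩; exact absurd h (by decide)
  isWf := by
    intro a ha b hb h c
    simp only [Finset.mem_insert, Finset.mem_singleton] at ha hb
    rcases ha with rfl | rfl | rfl <;> rcases hb with rfl | rfl | rfl <;>
      simp_all [Prod.ext_iff]

lemma red_ex_not_wf (i : ℕ) (hi : i ∈ ({1, 2, 3, 4} : Set ℕ)) :
    ¬ (Red i exPCAF).wf := by
  intro hwf
  have h0 : (0 : ℕ) ∈ (Red i exPCAF).args := by simp [Red, exPCAF]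
  have h1 : (1 : ℕ) ∈ (Red i exPCAF).args := by simp [Red, exPCAF]
  have hc : (Red i exPCAF).claim 1 = (Red i exPCAF).claim 0 := by
    simp [Red, exPCAF]
  have key := (hwf 1 h1 0 h0 hc 2).mp
  simp only [Set.mem_insert_iff, Set.mem_singleton_iff] at hi
  have h12 : ((1 : ℕ), (2 : ℕ)) ∈ (Red i exPCAF).att := by
    show ((1 : ℕ), (2 : ℕ)) ∈ redAtt i exPCAF
    rcases hi with rfl | rfl | rfl | rfl <;> simp [redAtt, exPCAF, Prod.ext_iff]
  have h02 : ((0 : ℕ), (2 : ℕ)) ∉ (Red i exPCAF).att := by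
    show ((0 : ℕ), (2 : ℕ)) ∉ redAtt i exPCAF
    rcases hi with rfl | rfl | rfl | rfl <;> simp [redAtt, exPCAF, Prod.ext_iff]
  exact h02 (key h12)

lemma wf_ssub_image (i : ℕ) (hi : i ∈ ({1, 2, 3, 4} : Set ℕ)) :
    wfCAFs ⊂ ImageI i := by
  refine ⟨wf_sub_image i hi, fun hsub => ?_⟩
  exact red_ex_not_wf i hi (hsub ⟨exPCAF, rfl⟩)

/-- A CAF not in any `Image_i`. -/
def badCAF : CAF where
  args := {0, 1}
  att := {(0, 1)}
  claim := fun _ => 0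
  att_dom := by
    intro p hp
    simp only [Set.mem_singleton_iff] at hp
    subst hp; simp

lemma selfAtt (i : ℕ) (hi : i ∈ ({1, 2, 3, 4} : Set ℕ)) (P : PCAF) (x : ℕ)
    (h : (x, x) ∈ P.att) : (x, x) ∈ redAtt i P := by
  have hnp : ¬ P.pref x x := fun hp => P.pref_asymm x x hp hp
  simp only [Set.mem_insert_iff, Set.mem_singleton_iff] at hi
  rcases hi with rfl | rfl | rfl | rfl <;> simp [redAtt] <;> tauto

lemma redAttSub (i : ℕ) (hi : i ∈ ({1, 2, 3, 4} : Set ℕ)) (P : PCAF)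
    (p : ℕ × ℕ) (hp : p ∈ redAtt i P) : p ∈ P.att ∨ (p.2, p.1) ∈ P.att := by
  simp only [Set.mem_insert_iff, Set.mem_singleton_iff] at hi
  rcases hi with rfl | rfl | rfl | rfl <;> simp [redAtt] at hp <;> tauto

lemma bad_not_mem (i : ℕ) (hi : i ∈ ({1, 2, 3, 4} : Set ℕ)) :
    badCAF ∉ ImageI i := by
  rintro ⟨P, hP⟩
  have hatt : redAtt i P = ({(0, 1)} : Set (ℕ × ℕ)) := congrArg CAF.att hP
  have hclaim : P.claim = fun _ => 0 := congrArg CAF.claim hP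
  have hargs : P.args = ({0, 1} : Finset ℕ) := congrArg CAF.args hP
  have h01 : ((0 : ℕ), (1 : ℕ)) ∈ redAtt i P := by rw [hatt]; rfl
  have h0 : (0 : ℕ) ∈ P.args := by rw [hargs]; simp
  have h1 : (1 : ℕ) ∈ P.args := by rw [hargs]; simp
  have hceq : P.claim 0 = P.claim 1 := by rw [hclaim]
  rcases redAttSub i hi P _ h01 with h | h
  · have h11 : ((1 : ℕ), (1 : ℕ)) ∈ P.att := (P.isWf 0 h0 1 h1 hceq 1).mp h
    have := selfAtt i hi P 1 h11
    rw [hatt] at this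
    simp [Prod.ext_iff] at this
  · have h00 : ((0 : ℕ), (0 : ℕ)) ∈ P.att := (P.isWf 1 h1 0 h0 hceq.symm 0).mp h
    have := selfAtt i hi P 0 h00
    rw [hatt] at this
    simp [Prod.ext_iff] at this

end Aux

/-- For every `i ∈ {1,2,3,4}`, the class of well-formed CAFs is a proper subclass
of `Image_i`, and `Image_i` is a proper subclass of the class of all CAFs. -/
theorem stmt_0 :
    ∀ i ∈ ({1, 2, 3, 4} : Set ℕ),
      wfCAFs ⊂ ImageI i ∧ ImageI i ⊂ (Set.univ : Set CAF) := by
  intro i hi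
  refine ⟨wf_ssub_image i hi, Set.subset_univ _, fun hsub => ?_⟩
  exact bad_not_mem i hi (hsub (Set.mem_univ badCAF))
end

section
/- For every i ∈ {1,2,4}, the class Image_3 is a proper subclass of Image_i: every CAF obtainable by applying Reduction 3 to a PCAF is also obtainable by applying Reduction i to some PCAF, and the inclusion is strict. -/
lemma mem_redAtt1 (G : PCAF) (p : ℕ × ℕ) :
    p ∈ redAtt 1 G ↔ (p ∈ G.att ∧ ¬ G.pref p.2 p.1) := by simp [redAtt]

lemma mem_redAtt2 (G : PCAF) (p : ℕ × ℕ) :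
    p ∈ redAtt 2 G ↔ ((p ∈ G.att ∧ ¬ G.pref p.2 p.1) ∨
      ((p.2, p.1) ∈ G.att ∧ p ∉ G.att ∧ G.pref p.1 p.2)) := by simp [redAtt]

lemma mem_redAtt3 (G : PCAF) (p : ℕ × ℕ) :
    p ∈ redAtt 3 G ↔ ((p ∈ G.att ∧ ¬ G.pref p.2 p.1) ∨
      (p ∈ G.att ∧ (p.2, p.1) ∉ G.att)) := by simp [redAtt]

lemma mem_redAtt4 (G : PCAF) (p : ℕ × ℕ) :
    p ∈ redAtt 4 G ↔ ((p ∈ G.att ∧ ¬ G.pref p.2 p.1) ∨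
      ((p.2, p.1) ∈ G.att ∧ p ∉ G.att ∧ G.pref p.1 p.2) ∨
      (p ∈ G.att ∧ (p.2, p.1) ∉ G.att)) := by simp [redAtt]

/-- The modified PCAF used to show `Image_3 ⊆ Image_i`. -/
def modPCAF (G : PCAF) : PCAF where
  toCAF := G.toCAF
  pref := fun a b => G.pref a b ∧ (a, b) ∈ G.att ∧ (b, a) ∈ G.att
  pref_dom := fun a b h => G.pref_dom a b h.1
  pref_asymm := fun a b h h' => G.pref_asymm a b h.1 h'.1
  isWf := G.isWf

lemma Red_att (i : ℕ) (F : PCAF) : (Red i F).att = redAtt i F := rfl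

lemma modPCAF_att (G : PCAF) : (modPCAF G).att = G.att := rfl

lemma modPCAF_pref (G : PCAF) (a b : ℕ) :
    (modPCAF G).pref a b ↔ (G.pref a b ∧ (a, b) ∈ G.att ∧ (b, a) ∈ G.att) := Iff.rfl

lemma incl124 (i : ℕ) (hi : i = 1 ∨ i = 2 ∨ i = 4) : ImageI 3 ⊆ ImageI i := by
  rintro F ⟨G, rfl⟩
  refine ⟨modPCAF G, CAF.ext' rfl ?_ rfl⟩
  rw [Red_att, Red_att]
  ext p
  rcases hi with rfl | rfl | rfl
  · simp only [mem_redAtt1, mem_redAtt3, modPCAF_att, modPCAF_pref]; tauto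
  · simp only [mem_redAtt2, mem_redAtt3, modPCAF_att, modPCAF_pref]; tauto
  · simp only [mem_redAtt4, mem_redAtt3, modPCAF_att, modPCAF_pref]; tauto

/-! counterexample for i = 1 and i = 4 -/

def cl4 : ℕ → ℕ := fun n => if n = 0 then 0 else 1

def F4 : CAF where
  args := {0, 1, 2}
  att := {(0, 1), (1, 0)}
  claim := cl4
  att_dom := by rintro ⟨a, b⟩ hp; simp_all [Prod.ext_iff] <;> omega

def G1 : PCAF where
  args := {0, 1, 2}
  att := {(0, 1), (1, 0), (2, 0)}
  claim := cl4
  att_dom := by rintro ⟨a, b⟩ hp; simp_all [Prod.ext_iff] <;> omega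
  pref := fun x y => x = 0 ∧ y = 2
  pref_dom := by rintro a b ⟨rfl, rfl⟩; simp
  pref_asymm := by rintro a b ⟨rfl, rfl⟩; simp
  isWf := by
    intro a ha b hb hcl c
    simp only [Finset.mem_insert, Finset.mem_singleton] at ha hb
    rcases ha with rfl | rfl | rfl <;> rcases hb with rfl | rfl | rfl <;>
      simp_all [cl4, Prod.ext_iff]

def G4 : PCAF where
  args := {0, 1, 2}
  att := {(0, 1)}
  claim := cl4
  att_dom := by rintro ⟨a, b⟩ hp; simp_all [Prod.ext_iff] <;> omega
  pref := fun x y => x = 1 ∧ y = 0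
  pref_dom := by rintro a b ⟨rfl, rfl⟩; simp
  pref_asymm := by rintro a b ⟨rfl, rfl⟩; simp
  isWf := by
    intro a ha b hb hcl c
    simp only [Finset.mem_insert, Finset.mem_singleton] at ha hb
    rcases ha with rfl | rfl | rfl <;> rcases hb with rfl | rfl | rfl <;>
      simp_all [cl4, Prod.ext_iff]

lemma F4_mem1 : F4 ∈ ImageI 1 := by
  refine ⟨G1, CAF.ext' rfl ?_ rfl⟩
  ext ⟨a, b⟩
  rw [Red_att, mem_redAtt1]
  show ((a, b) ∈ G1.att ∧ ¬(b = 0 ∧ a = 2)) ↔ (a, b) ∈ F4.att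
  simp [G1, F4, Prod.ext_iff] <;> omega

lemma F4_mem4 : F4 ∈ ImageI 4 := by
  refine ⟨G4, CAF.ext' rfl ?_ rfl⟩
  ext ⟨a, b⟩
  rw [Red_att, mem_redAtt4]
  show (((a, b) ∈ G4.att ∧ ¬(b = 1 ∧ a = 0)) ∨
      ((b, a) ∈ G4.att ∧ (a, b) ∉ G4.att ∧ (a = 1 ∧ b = 0)) ∨
      ((a, b) ∈ G4.att ∧ (b, a) ∉ G4.att)) ↔ (a, b) ∈ F4.att
  simp [G4, F4, Prod.ext_iff] <;> omega

lemma F4_not3 : F4 ∉ ImageI 3 := by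
  rintro ⟨G, hG⟩
  have hatt : redAtt 3 G = F4.att := congrArg (fun F : CAF => F.att) hG
  have hargs : G.args = F4.args := by rw [← hG]; rfl
  have hcl : G.claim = F4.claim := by rw [← hG]; rfl
  have h10 : ((1 : ℕ), (0 : ℕ)) ∈ redAtt 3 G :=
    hatt.symm ▸ (by simp [F4] : ((1 : ℕ), (0 : ℕ)) ∈ F4.att)
  rw [mem_redAtt3] at h10
  have h10R : ((1 : ℕ), (0 : ℕ)) ∈ G.att := by tauto
  have h1a : (1 : ℕ) ∈ G.args := by rw [hargs]; simp [F4]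
  have h2a : (2 : ℕ) ∈ G.args := by rw [hargs]; simp [F4]
  have hc12 : G.claim 1 = G.claim 2 := by rw [hcl]; rfl
  have h20R : ((2 : ℕ), (0 : ℕ)) ∈ G.att := (G.isWf 1 h1a 2 h2a hc12 0).mp h10R
  have h20D : ((2 : ℕ), (0 : ℕ)) ∉ redAtt 3 G :=
    hatt.symm ▸ (by simp [F4, Prod.ext_iff] : ((2 : ℕ), (0 : ℕ)) ∉ F4.att)
  rw [mem_redAtt3] at h20D
  push_neg at h20D
  have hp02 : G.pref 0 2 := h20D.1 h20R
  have h02R : ((0 : ℕ), (2 : ℕ)) ∈ G.att := h20D.2 h20R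
  have h02D : ((0 : ℕ), (2 : ℕ)) ∉ redAtt 3 G :=
    hatt.symm ▸ (by simp [F4, Prod.ext_iff] : ((0 : ℕ), (2 : ℕ)) ∉ F4.att)
  rw [mem_redAtt3] at h02D
  push_neg at h02D
  exact G.pref_asymm 0 2 hp02 (h02D.1 h02R)

/-! counterexample for i = 2 -/

def cl3 : ℕ → ℕ := fun n => if n ≤ 1 then 0 else 1

def F3 : CAF where
  args := {0, 1, 2, 3}
  att := {(1, 2), (2, 0)}
  claim := cl3
  att_dom := by rintro ⟨a, b⟩ hp; simp_all [Prod.ext_iff] <;> omega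

def G2 : PCAF where
  args := {0, 1, 2, 3}
  att := {(0, 2), (1, 2)}
  claim := cl3
  att_dom := by rintro ⟨a, b⟩ hp; simp_all [Prod.ext_iff] <;> omega
  pref := fun x y => x = 2 ∧ y = 0
  pref_dom := by rintro a b ⟨rfl, rfl⟩; simp
  pref_asymm := by rintro a b ⟨rfl, rfl⟩; simp
  isWf := by
    intro a ha b hb hcl c
    simp only [Finset.mem_insert, Finset.mem_singleton] at ha hb
    rcases ha with rfl | rfl | rfl | rfl <;> rcases hb with rfl | rfl | rfl | rfl <;>
      simp_all [cl3, Prod.ext_iff]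

lemma F3_mem2 : F3 ∈ ImageI 2 := by
  refine ⟨G2, CAF.ext' rfl ?_ rfl⟩
  ext ⟨a, b⟩
  rw [Red_att, mem_redAtt2]
  show (((a, b) ∈ G2.att ∧ ¬(b = 2 ∧ a = 0)) ∨
      ((b, a) ∈ G2.att ∧ (a, b) ∉ G2.att ∧ (a = 2 ∧ b = 0))) ↔ (a, b) ∈ F3.att
  simp [G2, F3, Prod.ext_iff] <;> omega

lemma F3_not3 : F3 ∉ ImageI 3 := by
  rintro ⟨G, hG⟩
  have hatt : redAtt 3 G = F3.att := congrArg (fun F : CAF => F.att) hG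
  have hargs : G.args = F3.args := by rw [← hG]; rfl
  have hcl : G.claim = F3.claim := by rw [← hG]; rfl
  have h12 : ((1 : ℕ), (2 : ℕ)) ∈ redAtt 3 G :=
    hatt.symm ▸ (by simp [F3] : ((1 : ℕ), (2 : ℕ)) ∈ F3.att)
  rw [mem_redAtt3] at h12
  have h12R : ((1 : ℕ), (2 : ℕ)) ∈ G.att := by tauto
  have h20 : ((2 : ℕ), (0 : ℕ)) ∈ redAtt 3 G :=
    hatt.symm ▸ (by simp [F3] : ((2 : ℕ), (0 : ℕ)) ∈ F3.att)
  rw [mem_redAtt3] at h20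
  have h20R : ((2 : ℕ), (0 : ℕ)) ∈ G.att := by tauto
  have h0a : (0 : ℕ) ∈ G.args := by rw [hargs]; simp [F3]
  have h1a : (1 : ℕ) ∈ G.args := by rw [hargs]; simp [F3]
  have h2a : (2 : ℕ) ∈ G.args := by rw [hargs]; simp [F3]
  have h3a : (3 : ℕ) ∈ G.args := by rw [hargs]; simp [F3]
  have hc01 : G.claim 0 = G.claim 1 := by rw [hcl]; rfl
  have hc23 : G.claim 2 = G.claim 3 := by rw [hcl]; rfl
  have h02R : ((0 : ℕ), (2 : ℕ)) ∈ G.att := (G.isWf 0 h0a 1 h1a hc01 2).mpr h12R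
  have h30R : ((3 : ℕ), (0 : ℕ)) ∈ G.att := (G.isWf 2 h2a 3 h3a hc23 0).mp h20R
  have h02D : ((0 : ℕ), (2 : ℕ)) ∉ redAtt 3 G :=
    hatt.symm ▸ (by simp [F3, Prod.ext_iff] : ((0 : ℕ), (2 : ℕ)) ∉ F3.att)
  rw [mem_redAtt3] at h02D; push_neg at h02D
  have h30D : ((3 : ℕ), (0 : ℕ)) ∉ redAtt 3 G :=
    hatt.symm ▸ (by simp [F3, Prod.ext_iff] : ((3 : ℕ), (0 : ℕ)) ∉ F3.att)
  rw [mem_redAtt3] at h30D; push_neg at h30D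
  have hp20 : G.pref 2 0 := h02D.1 h02R
  have hp03 : G.pref 0 3 := h30D.1 h30R
  have h03R : ((0 : ℕ), (3 : ℕ)) ∈ G.att := h30D.2 h30R
  have h03D : ((0 : ℕ), (3 : ℕ)) ∉ redAtt 3 G :=
    hatt.symm ▸ (by simp [F3, Prod.ext_iff] : ((0 : ℕ), (3 : ℕ)) ∉ F3.att)
  rw [mem_redAtt3] at h03D; push_neg at h03D
  exact G.pref_asymm 0 3 hp03 (h03D.1 h03R)
/-- For every `i ∈ {1,2,4}`, the class `Image_3` is a proper subclass of `Image_i`. -/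
theorem stmt_2 :
    ∀ i ∈ ({1, 2, 4} : Set ℕ), ImageI 3 ⊂ ImageI i := by
  intro i hi
  simp only [Set.mem_insert_iff, Set.mem_singleton_iff] at hi
  rw [Set.ssubset_def]
  refine ⟨incl124 i hi, fun hsub => ?_⟩
  rcases hi with rfl | rfl | rfl
  · exact F4_not3 (hsub F4_mem1)
  · exact F3_not3 (hsub F3_mem2)
  · exact F4_not3 (hsub F4_mem4)
end

section
/- A CAF F = (A,R,claim) belongs to Image_1 (i.e. F = Red_1(F') for some PCAF F') if and only if for all arguments a,b, (a,b) ∈ wfp(F) implies (b,a) ∉ wfp(F). -/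
/-- Characterization of `Image_1`: a CAF `F` belongs to `Image_1` iff
`(a,b) ∈ wfp(F)` implies `(b,a) ∉ wfp(F)`. -/
theorem stmt_3 (F : CAF) :
    F ∈ ImageI 1 ↔ ∀ a b : ℕ, (a, b) ∈ F.wfp → (b, a) ∉ F.wfp := by
  constructor
  · rintro ⟨G, rfl⟩ a b hab hba
    simp only [CAF.wfp, Red, redAtt, if_pos rfl, Set.mem_setOf_eq] at hab hba
    obtain ⟨ha, hb, hnab, a', ha', hca, ha'b, -⟩ := hab
    obtain ⟨-, -, hnba, b', hb', hcb, hb'a, -⟩ := hba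
    have h1 : (a, b) ∈ G.att := (G.isWf a' ha' a ha hca b).mp ha'b
    have h2 : (b, a) ∈ G.att := (G.isWf b' hb' b hb hcb a).mp hb'a
    have p1 : G.pref b a := by
      by_contra h; exact hnab ⟨h1, h⟩
    have p2 : G.pref a b := by
      by_contra h; exact hnba ⟨h2, h⟩
    exact G.pref_asymm a b p2 p1
  · intro h
    have hdom : ∀ p ∈ F.att ∪ F.wfp, p.1 ∈ F.args ∧ p.2 ∈ F.args := by
      rintro p (hp | hp)
      · exact F.att_dom p hp
      · exact ⟨hp.1, hp.2.1⟩
    have hpdom : ∀ a b : ℕ, (fun a b => (b, a) ∈ F.wfp) a b →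
        a ∈ (⟨F.args, F.att ∪ F.wfp, F.claim, hdom⟩ : CAF).args ∧
        b ∈ (⟨F.args, F.att ∪ F.wfp, F.claim, hdom⟩ : CAF).args := by
      intro a b hp
      exact ⟨hp.2.1, hp.1⟩
    have hpasymm : ∀ a b : ℕ, (fun a b => (b, a) ∈ F.wfp) a b →
        ¬ (fun a b => (b, a) ∈ F.wfp) b a := by
      intro a b hp hq
      exact h _ _ hp hq
    have hwf : (⟨F.args, F.att ∪ F.wfp, F.claim, hdom⟩ : CAF).wf := by
      intro a ha b hb hcl c
      have key : ∀ x, x ∈ F.args → ∀ y,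
          ((x, y) ∈ F.att ∪ F.wfp ↔ ∃ x' ∈ F.args, F.claim x' = F.claim x ∧ (x', y) ∈ F.att) := by
        intro x hx y
        constructor
        · rintro (hxy | hxy)
          · exact ⟨x, hx, rfl, hxy⟩
          · obtain ⟨-, -, -, x', hx', hcx, hxy'⟩ := hxy
            exact ⟨x', hx', hcx, hxy'⟩
        · rintro ⟨x', hx', hcx, hxy'⟩
          by_cases hxa : (x, y) ∈ F.att
          · exact Or.inl hxa
          · exact Or.inr ⟨hx, (F.att_dom _ hxy').2, hxa, x', hx', hcx, hxy'⟩
      show ((a, c) ∈ F.att ∪ F.wfp) ↔ ((b, c) ∈ F.att ∪ F.wfp)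
      rw [key a ha c, key b hb c, hcl]
    refine ⟨⟨⟨F.args, F.att ∪ F.wfp, F.claim, hdom⟩,
      fun a b => (b, a) ∈ F.wfp, hpdom, hpasymm, hwf⟩, ?_⟩
    have hatt : redAtt 1 ⟨⟨F.args, F.att ∪ F.wfp, F.claim, hdom⟩,
        fun a b => (b, a) ∈ F.wfp, hpdom, hpasymm, hwf⟩ = F.att := by
      ext p
      simp only [redAtt, if_pos rfl, Set.mem_setOf_eq]
      constructor
      · rintro ⟨hp | hp, hnp⟩
        · exact hp
        · exact absurd hp hnp
      · intro hp
        refine ⟨Or.inl hp, fun hq => ?_⟩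
        exact hq.2.2.1 hp
    cases F with
    | mk args att claim dom =>
      simp only [Red, CAF.mk.injEq]
      exact ⟨trivial, hatt, trivial⟩
end

section
/- A CAF F = (A,R,claim) belongs to Image_2 (i.e. F = Red_2(F') for some PCAF F') if and only if there are no arguments a,a',b,b' in F with claim(a)=claim(a') and claim(b)=claim(b') such that (a,b) ∈ wfp(F), (b,a) ∉ R, (a',b) ∈ R, and either (b,a') ∈ R, or ((a',b') ∉ R and (b',a') ∉ R). -/
/-- Auxiliary: unfolding of `redAtt 2`. -/
lemma redAtt_two (G : PCAF) :
    redAtt 2 G = {p | (p ∈ G.att ∧ ¬ G.pref p.2 p.1) ∨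
         ((p.2, p.1) ∈ G.att ∧ p ∉ G.att ∧ G.pref p.1 p.2)} := by
  unfold redAtt
  norm_num

/-- Auxiliary: `Rev` condition for the `Image_2` construction. -/
def Rev2 (F : CAF) (c b : ℕ) : Prop :=
  ∃ a ∈ F.args, F.claim a = c ∧ (a, b) ∈ F.wfp ∧ (b, a) ∉ F.att

/-- Auxiliary: the attack relation of the constructed PCAF. -/
def att2 (F : CAF) : Set (ℕ × ℕ) :=
  {p | (p.1 ∈ F.args ∧ (∃ u ∈ F.args, F.claim u = F.claim p.1 ∧ (u, p.2) ∈ F.att) ∧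
          ¬ Rev2 F (F.claim p.1) p.2)
     ∨ (p.1 ∈ F.args ∧ ∃ b₀ ∈ F.args, F.claim b₀ = F.claim p.1 ∧ (p.2, b₀) ∈ F.att ∧
          Rev2 F (F.claim p.2) b₀)}

/-- Auxiliary: the preference relation of the constructed PCAF. -/
def pref2 (F : CAF) (p q : ℕ) : Prop :=
  ((q, p) ∈ F.wfp ∧ ¬ Rev2 F (F.claim q) p)
  ∨ ((p, q) ∈ F.att ∧ Rev2 F (F.claim p) q)
  ∨ ((q, p) ∉ F.att ∧ q ∈ F.args ∧ ∃ b₀ ∈ F.args, F.claim b₀ = F.claim q ∧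
       (p, b₀) ∈ F.att ∧ Rev2 F (F.claim p) b₀)

/-- Characterization of `Image_2`: a CAF `F` belongs to `Image_2` iff there are no
arguments `a, a', b, b'` of `F` with `claim a = claim a'` and `claim b = claim b'`
such that `(a,b) ∈ wfp(F)`, `(b,a) ∉ R`, `(a',b) ∈ R`, and either `(b,a') ∈ R` or
(`(a',b') ∉ R` and `(b',a') ∉ R`). -/
theorem stmt_4 (F : CAF) :
    F ∈ ImageI 2 ↔
      ¬ ∃ a a' b b' : ℕ,
          a ∈ F.args ∧ a' ∈ F.args ∧ b ∈ F.args ∧ b' ∈ F.args ∧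
          F.claim a = F.claim a' ∧ F.claim b = F.claim b' ∧
          (a, b) ∈ F.wfp ∧ (b, a) ∉ F.att ∧ (a', b) ∈ F.att ∧
          ((b, a') ∈ F.att ∨ ((a', b') ∉ F.att ∧ (b', a') ∉ F.att)) := by
  constructor
  · rintro ⟨G, rfl⟩
    rintro ⟨a, a', b, b', ha, ha', hb, hb', hca, hcb, hwfp, hba, hab', hdisj⟩
    have hD : ∀ p : ℕ × ℕ, p ∈ (Red 2 G).att ↔
        ((p ∈ G.att ∧ ¬ G.pref p.2 p.1) ∨
         ((p.2, p.1) ∈ G.att ∧ p ∉ G.att ∧ G.pref p.1 p.2)) := by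
      intro p
      show p ∈ redAtt 2 G ↔ _
      rw [redAtt_two]
      rfl
    have ha0 : a ∈ G.args := ha
    have ha'0 : a' ∈ G.args := ha'
    have hb0 : b ∈ G.args := hb
    have hb'0 : b' ∈ G.args := hb'
    have habD : (a, b) ∉ (Red 2 G).att := hwfp.2.2.1
    by_cases hR : (a', b) ∈ G.att
    · -- a attacks b in G as well, so b ≻ a, which forces (b,a) ∈ D
      have habR : (a, b) ∈ G.att := (G.isWf a' ha'0 a ha0 hca.symm b).mp hR
      have hpba : G.pref b a := by
        by_contra hnp
        exact habD ((hD (a, b)).mpr (Or.inl ⟨habR, hnp⟩))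
      apply hba
      rw [hD (b, a)]
      by_cases hbaR : (b, a) ∈ G.att
      · exact Or.inl ⟨hbaR, fun h => G.pref_asymm b a hpba h⟩
      · exact Or.inr ⟨habR, hbaR, hpba⟩
    · -- the D-attack (a',b) comes from a reversal
      rcases (hD (a', b)).mp hab' with ⟨h1, _⟩ | ⟨hbR, hnR, hp⟩
      · exact hR h1
      rcases hdisj with hba' | ⟨hna'b', hnb'a'⟩
      · rcases (hD (b, a')).mp hba' with ⟨_, h2⟩ | ⟨h3, _, _⟩
        · exact h2 hp
        · exact hR h3
      · have hb'R : (b', a') ∈ G.att := (G.isWf b hb0 b' hb'0 hcb a').mp hbR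
        have hp2 : G.pref a' b' := by
          by_contra hnp
          exact hnb'a' ((hD (b', a')).mpr (Or.inl ⟨hb'R, hnp⟩))
        apply hna'b'
        rw [hD (a', b')]
        by_cases ha'b'R : (a', b') ∈ G.att
        · exact Or.inl ⟨ha'b'R, fun h => G.pref_asymm a' b' hp2 h⟩
        · exact Or.inr ⟨hb'R, ha'b'R, hp2⟩
  · intro H
    -- Key lemma from the hypothesis
    have hL : ∀ x b b', (x, b) ∈ F.att → Rev2 F (F.claim x) b → b' ∈ F.args →
        F.claim b' = F.claim b →
        (b, x) ∉ F.att ∧ ((x, b') ∈ F.att ∨ (b', x) ∈ F.att) := by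
      intro x b b' hxb hrev hb'A hcb
      obtain ⟨a, haA, hca, hwfp, hba⟩ := hrev
      by_contra hc
      push_neg at hc
      have hdisj : (b, x) ∈ F.att ∨ ((x, b') ∉ F.att ∧ (b', x) ∉ F.att) := by
        by_cases hbx : (b, x) ∈ F.att
        · exact Or.inl hbx
        · exact Or.inr (hc hbx)
      exact H ⟨a, x, b, b', haA, (F.att_dom _ hxb).1, hwfp.2.1, hb'A,
        hca, hcb.symm, hwfp, hba, hxb, hdisj⟩
    -- the preference relation implies a D-attack and no counter-attack
    have hPD : ∀ p q, pref2 F p q → (p, q) ∈ F.att ∧ (q, p) ∉ F.att := by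
      intro p q hpq
      rcases hpq with ⟨hw, hnr⟩ | ⟨hpq, hr⟩ | ⟨hnqp, hqA, b₀, hb₀A, hcb₀, hpb₀, hr⟩
      · refine ⟨?_, hw.2.2.1⟩
        by_contra h
        exact hnr ⟨q, hw.1, rfl, hw, h⟩
      · exact ⟨hpq, (hL p q q hpq hr (F.att_dom _ hpq).2 rfl).1⟩
      · refine ⟨?_, hnqp⟩
        rcases (hL p b₀ q hpb₀ hr hqA hcb₀.symm).2 with h | h
        · exact h
        · exact absurd h hnqp
    -- the constructed PCAF
    refine ⟨⟨⟨F.args, att2 F, F.claim, ?_⟩, pref2 F, ?_, ?_, ?_⟩, ?_⟩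
    · -- att_dom
      rintro p (⟨h1, ⟨u, _, _, huv⟩, _⟩ | ⟨h1, b₀, _, _, hpb, _⟩)
      · exact ⟨h1, (F.att_dom _ huv).2⟩
      · exact ⟨h1, (F.att_dom _ hpb).1⟩
    · -- pref_dom
      intro p q h
      have h' := (hPD p q h).1
      exact F.att_dom _ h'
    · -- pref_asymm
      intro p q h1 h2
      exact (hPD q p h2).2 (hPD p q h1).1
    · -- isWf
      intro x hx y hy hcl c
      have key : ∀ x y, x ∈ F.args → y ∈ F.args → F.claim x = F.claim y →
          (x, c) ∈ att2 F → (y, c) ∈ att2 F := by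
        rintro x y hx hy hcl (⟨_, ⟨u, huA, hcu, huc⟩, hnr⟩ | ⟨_, b₀, hb₀A, hcb₀, hcb, hr⟩)
        · exact Or.inl ⟨hy, ⟨u, huA, hcu.trans hcl, huc⟩, hcl ▸ hnr⟩
        · exact Or.inr ⟨hy, b₀, hb₀A, hcb₀.trans hcl, hcb, hr⟩
      exact ⟨key x y hx hy hcl, key y x hy hx hcl.symm⟩
    · -- Red 2 G = F
      refine CAF.ext' rfl ?_ rfl
      show redAtt 2 _ = F.att
      rw [redAtt_two]
      ext ⟨u, v⟩
      simp only [Set.mem_setOf_eq]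
      constructor
      · rintro (⟨hR, hnp⟩ | ⟨_, _, hp⟩)
        · -- clause 1
          by_contra hnuv
          rcases hR with ⟨huA, ⟨u₀, hu₀A, hcu₀, hu₀v⟩, hnrev⟩ |
            ⟨huA, b₀, hb₀A, hcb₀, hvb₀, hrev⟩
          · exact hnp (Or.inl ⟨⟨huA, (F.att_dom _ hu₀v).2, hnuv, u₀, hu₀A, hcu₀, hu₀v⟩,
              hnrev⟩)
          · exact hnp (Or.inr (Or.inr ⟨hnuv, huA, b₀, hb₀A, hcb₀, hvb₀, hrev⟩))
        · exact (hPD u v hp).1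
      · intro huv
        have hnp : ¬ pref2 F v u := fun h => (hPD v u h).2 huv
        by_cases hR : (u, v) ∈ att2 F
        · exact Or.inl ⟨hR, hnp⟩
        · by_cases hrev : Rev2 F (F.claim u) v
          · refine Or.inr ⟨?_, hR, Or.inr (Or.inl ⟨huv, hrev⟩)⟩
            exact Or.inr ⟨(F.att_dom _ huv).2, v, (F.att_dom _ huv).2, rfl, huv, hrev⟩
          · exact absurd (Or.inl ⟨(F.att_dom _ huv).1, ⟨u, (F.att_dom _ huv).1, rfl, huv⟩,
              hrev⟩) hR
end

section
/- A CAF F = (A,R,claim) belongs to Image_3 (i.e. F = Red_3(F') for some PCAF F') if and only if for all arguments a,b, (a,b) ∈ wfp(F) implies (b,a) ∈ R. -/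
/-- Characterization of `Image_3`: a CAF `F` belongs to `Image_3` iff
`(a,b) ∈ wfp(F)` implies `(b,a) ∈ R`. -/
theorem stmt_5 (F : CAF) :
    F ∈ ImageI 3 ↔ ∀ a b : ℕ, (a, b) ∈ F.wfp → (b, a) ∈ F.att := by
  constructor
  · rintro ⟨G, rfl⟩ a b hab
    obtain ⟨ha, hb, hnD, a', ha', hc, hD⟩ := hab
    simp only [Red, redAtt, if_neg (by norm_num : (3:ℕ) ≠ 1),
      if_neg (by norm_num : (3:ℕ) ≠ 2), if_pos rfl, ite_true, Set.mem_setOf_eq] at *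
    have ha'b : (a', b) ∈ G.att := by rcases hD with ⟨h, -⟩ | ⟨h, -⟩ <;> exact h
    have habR : (a, b) ∈ G.att := (G.isWf a' ha' a ha hc b).mp ha'b
    have hpref : G.pref b a := by
      by_contra hn
      exact hnD (Or.inl ⟨habR, hn⟩)
    have hbaR : (b, a) ∈ G.att := by
      by_contra hn
      exact hnD (Or.inr ⟨habR, hn⟩)
    exact Or.inl ⟨hbaR, G.pref_asymm b a hpref⟩
  · intro h
    -- Build the PCAF G with attacks F.att ∪ F.wfp and preference b ≻ a iff (a,b) ∈ wfp F
    have wfp_args : ∀ p ∈ F.wfp, p.1 ∈ F.args ∧ p.2 ∈ F.args := by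
      rintro p ⟨h1, h2, -⟩; exact ⟨h1, h2⟩
    set R' : Set (ℕ × ℕ) := F.att ∪ F.wfp with hR'
    have key : ∀ a ∈ F.args, ∀ b ∈ F.args, F.claim a = F.claim b →
        ∀ c, (a, c) ∈ R' → (b, c) ∈ R' := by
      intro a ha b hb hcl c hac
      rcases hac with hac | hac
      · by_cases hbc : (b, c) ∈ F.att
        · exact Or.inl hbc
        · exact Or.inr ⟨hb, (F.att_dom _ hac).2, hbc, a, ha, hcl, hac⟩
      · obtain ⟨-, hcarg, -, a'', ha'', hcl'', hatt''⟩ := hac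
        by_cases hbc : (b, c) ∈ F.att
        · exact Or.inl hbc
        · exact Or.inr ⟨hb, hcarg, hbc, a'', ha'', hcl''.trans hcl, hatt''⟩
    let G : PCAF :=
      { args := F.args
        att := R'
        claim := F.claim
        att_dom := by
          rintro p (hp | hp)
          · exact F.att_dom p hp
          · exact wfp_args p hp
        pref := fun x y => (y, x) ∈ F.wfp
        pref_dom := by
          intro a b hab
          obtain ⟨h1, h2, -⟩ := hab
          exact ⟨h2, h1⟩
        pref_asymm := by
          intro a b hab hba
          exact hba.2.2.1 (h b a hab)
        isWf := by
          intro a ha b hb hcl c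
          exact ⟨fun hx => key a ha b hb hcl c hx, fun hx => key b hb a ha hcl.symm c hx⟩ }
    refine ⟨G, ?_⟩
    have hatt : redAtt 3 G = F.att := by
      ext p
      simp only [redAtt, if_neg (by norm_num : (3:ℕ) ≠ 1),
        if_neg (by norm_num : (3:ℕ) ≠ 2), if_pos rfl, ite_true, Set.mem_setOf_eq]
      constructor
      · rintro (⟨hp, hnp⟩ | ⟨hp, hnp⟩)
        · rcases hp with hp | hp
          · exact hp
          · exact absurd hp hnp
        · rcases hp with hp | hp
          · exact hp
          · exact absurd (Or.inl (h p.1 p.2 hp)) hnp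
      · intro hp
        refine Or.inl ⟨Or.inl hp, fun hc => ?_⟩
        exact hc.2.2.1 hp
    show Red 3 G = F
    have : (Red 3 G).att = F.att := hatt
    cases F with
    | mk args att claim dom =>
      simp only [Red, CAF.mk.injEq] at this ⊢
      exact ⟨rfl, this, rfl⟩
end

section
/- For all i,j ∈ {1,2,3,4} with i ≠ j, the class ImageTrans_i is not a subclass of ImageTrans_j, i.e. there exists a CAF obtainable by Reduction i from a PCAF with transitive preferences that is not obtainable by Reduction j from any PCAF with transitive preferences. -/
namespace Stmt7

def cl : ℕ → ℕ := fun n => n / 3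

def G1 : PCAF where
  args := {1, 2, 3, 4}
  att := {p | p = (1, 1) ∨ p = (2, 1)}
  claim := cl
  att_dom := by
    rintro ⟨a, b⟩ hp
    simp only [Set.mem_setOf_eq, Prod.mk.injEq] at hp
    rcases hp with ⟨rfl, rfl⟩ | ⟨rfl, rfl⟩ <;> exact ⟨by decide, by decide⟩
  pref := fun a b => a = 1 ∧ b = 2
  pref_dom := by rintro a b ⟨rfl, rfl⟩; exact ⟨by decide, by decide⟩
  pref_asymm := by rintro a b ⟨rfl, rfl⟩ ⟨h, _⟩; omega
  isWf := by
    intro a ha b hb hab x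
    fin_cases ha <;> fin_cases hb <;>
      simp only [cl, Set.mem_setOf_eq, Prod.mk.injEq] at hab ⊢
    all_goals first | omega | tauto

def G3 : PCAF where
  args := {1, 2, 3, 4}
  att := {p | p = (1,1) ∨ p = (1,2) ∨ p = (1,3) ∨ p = (2,1) ∨ p = (2,2) ∨ p = (2,3) ∨ p = (3,1) ∨ p = (4,1)}
  claim := cl
  att_dom := by
    rintro ⟨a, b⟩ hp
    simp only [Set.mem_setOf_eq, Prod.mk.injEq] at hp
    rcases hp with ⟨rfl, rfl⟩|⟨rfl, rfl⟩|⟨rfl, rfl⟩|⟨rfl, rfl⟩|⟨rfl, rfl⟩|⟨rfl, rfl⟩|⟨rfl, rfl⟩|⟨rfl, rfl⟩ <;>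
      exact ⟨by decide, by decide⟩
  pref := fun a b => (a = 1 ∧ b = 2) ∨ (a = 3 ∧ b = 1) ∨ (a = 3 ∧ b = 2)
  pref_dom := by
    rintro a b (⟨rfl, rfl⟩|⟨rfl, rfl⟩|⟨rfl, rfl⟩) <;> exact ⟨by decide, by decide⟩
  pref_asymm := by
    rintro a b (⟨rfl, rfl⟩|⟨rfl, rfl⟩|⟨rfl, rfl⟩) (⟨h, h'⟩|⟨h, h'⟩|⟨h, h'⟩) <;> omega
  isWf := by
    intro a ha b hb hab x
    fin_cases ha <;> fin_cases hb <;>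
      simp only [cl, Set.mem_setOf_eq, Prod.mk.injEq] at hab ⊢
    all_goals first | omega | tauto

lemma G1_att : G1.att = {p | p = (1, 1) ∨ p = (2, 1)} := rfl
lemma G1_pref : G1.pref = fun a b => a = 1 ∧ b = 2 := rfl
lemma G3_att : G3.att = {p | p = (1,1) ∨ p = (1,2) ∨ p = (1,3) ∨ p = (2,1) ∨ p = (2,2) ∨ p = (2,3) ∨ p = (3,1) ∨ p = (4,1)} := rfl
lemma G3_pref : G3.pref = fun a b => (a = 1 ∧ b = 2) ∨ (a = 3 ∧ b = 1) ∨ (a = 3 ∧ b = 2) := rfl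

lemma transG1 : Transitive G1.pref := by
  intro a b c hab hbc
  simp only [G1_pref] at hab hbc ⊢
  omega

lemma transG3 : Transitive G3.pref := by
  intro a b c hab hbc
  simp only [G3_pref] at hab hbc ⊢
  omega

def F1 : CAF := Red 1 G1
def F2 : CAF := Red 2 G1
def F4 : CAF := Red 4 G1
def F3 : CAF := Red 3 G3

lemma memTI1 : F1 ∈ ImageTransI 1 := ⟨G1, transG1, rfl⟩
lemma memTI2 : F2 ∈ ImageTransI 2 := ⟨G1, transG1, rfl⟩
lemma memTI4 : F4 ∈ ImageTransI 4 := ⟨G1, transG1, rfl⟩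
lemma memTI3 : F3 ∈ ImageTransI 3 := ⟨G3, transG3, rfl⟩

lemma mem_redAtt1 (G : PCAF) (a b : ℕ) :
    (a, b) ∈ redAtt 1 G ↔ ((a, b) ∈ G.att ∧ ¬ G.pref b a) := by
  norm_num [redAtt]

lemma mem_redAtt2 (G : PCAF) (a b : ℕ) :
    (a, b) ∈ redAtt 2 G ↔ (((a, b) ∈ G.att ∧ ¬ G.pref b a) ∨
      ((b, a) ∈ G.att ∧ (a, b) ∉ G.att ∧ G.pref a b)) := by
  norm_num [redAtt]

lemma mem_redAtt3 (G : PCAF) (a b : ℕ) :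
    (a, b) ∈ redAtt 3 G ↔ (((a, b) ∈ G.att ∧ ¬ G.pref b a) ∨
      ((a, b) ∈ G.att ∧ (b, a) ∉ G.att)) := by
  norm_num [redAtt]

lemma mem_redAtt4 (G : PCAF) (a b : ℕ) :
    (a, b) ∈ redAtt 4 G ↔ (((a, b) ∈ G.att ∧ ¬ G.pref b a) ∨
      ((b, a) ∈ G.att ∧ (a, b) ∉ G.att ∧ G.pref a b) ∨
      ((a, b) ∈ G.att ∧ (b, a) ∉ G.att)) := by
  norm_num [redAtt]

lemma memF1 (a b : ℕ) : (a, b) ∈ F1.att ↔ (a = 1 ∧ b = 1) := by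
  show (a, b) ∈ redAtt 1 G1 ↔ _
  rw [mem_redAtt1]
  simp only [G1_att, G1_pref, Set.mem_setOf_eq, Prod.mk.injEq]
  omega

lemma memF2 (a b : ℕ) : (a, b) ∈ F2.att ↔ ((a = 1 ∧ b = 1) ∨ (a = 1 ∧ b = 2)) := by
  show (a, b) ∈ redAtt 2 G1 ↔ _
  rw [mem_redAtt2]
  simp only [G1_att, G1_pref, Set.mem_setOf_eq, Prod.mk.injEq]
  omega

lemma memF4 (a b : ℕ) : (a, b) ∈ F4.att ↔ ((a = 1 ∧ b = 1) ∨ (a = 1 ∧ b = 2) ∨ (a = 2 ∧ b = 1)) := by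
  show (a, b) ∈ redAtt 4 G1 ↔ _
  rw [mem_redAtt4]
  simp only [G1_att, G1_pref, Set.mem_setOf_eq, Prod.mk.injEq]
  omega

lemma memF3 (a b : ℕ) : (a, b) ∈ F3.att ↔ ((a = 1 ∧ b = 1) ∨ (a = 1 ∧ b = 2) ∨ (a = 2 ∧ b = 2) ∨ (a = 2 ∧ b = 3) ∨ (a = 3 ∧ b = 1) ∨ (a = 4 ∧ b = 1)) := by
  show (a, b) ∈ redAtt 3 G3 ↔ _
  rw [mem_redAtt3]
  simp only [G3_att, G3_pref, Set.mem_setOf_eq, Prod.mk.injEq]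
  constructor
  · rintro (⟨h, hn⟩ | ⟨h, hn⟩) <;>
      rcases h with ⟨rfl,rfl⟩|⟨rfl,rfl⟩|⟨rfl,rfl⟩|⟨rfl,rfl⟩|⟨rfl,rfl⟩|⟨rfl,rfl⟩|⟨rfl,rfl⟩|⟨rfl,rfl⟩ <;>
      omega
  · rintro (⟨rfl,rfl⟩|⟨rfl,rfl⟩|⟨rfl,rfl⟩|⟨rfl,rfl⟩|⟨rfl,rfl⟩|⟨rfl,rfl⟩) <;>
      omega

lemma F1_not_2 : F1 ∉ ImageTransI 2 := by
  rintro ⟨G, htr, hG⟩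
  have hargs : G.args = ({1, 2, 3, 4} : Finset ℕ) := congrArg CAF.args hG
  have hclaim : G.claim = cl := congrArg CAF.claim hG
  have hratt : redAtt 2 G = F1.att := congrArg CAF.att hG
  have hD : ∀ a b : ℕ, (a, b) ∈ redAtt 2 G ↔ (a, b) ∈ F1.att := fun a b => by rw [hratt]
  have hm1 : (1:ℕ) ∈ G.args := by rw [hargs]; decide
  have hm2 : (2:ℕ) ∈ G.args := by rw [hargs]; decide
  have hc12 : G.claim 1 = G.claim 2 := by simp only [hclaim, cl]
  have hw12_1 := G.isWf 1 hm1 2 hm2 hc12 1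
  have h11 := (mem_redAtt2 G 1 1).symm.trans (hD 1 1)
  rw [memF1] at h11
  norm_num at h11
  have h21 := (mem_redAtt2 G 2 1).symm.trans (hD 2 1)
  rw [memF1] at h21
  norm_num at h21
  have h12 := (mem_redAtt2 G 1 2).symm.trans (hD 1 2)
  rw [memF1] at h12
  norm_num at h12
  have as12 := G.pref_asymm 1 2
  tauto

lemma F1_not_3 : F1 ∉ ImageTransI 3 := by
  rintro ⟨G, htr, hG⟩
  have hargs : G.args = ({1, 2, 3, 4} : Finset ℕ) := congrArg CAF.args hG
  have hclaim : G.claim = cl := congrArg CAF.claim hG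
  have hratt : redAtt 3 G = F1.att := congrArg CAF.att hG
  have hD : ∀ a b : ℕ, (a, b) ∈ redAtt 3 G ↔ (a, b) ∈ F1.att := fun a b => by rw [hratt]
  have hm1 : (1:ℕ) ∈ G.args := by rw [hargs]; decide
  have hm2 : (2:ℕ) ∈ G.args := by rw [hargs]; decide
  have hc12 : G.claim 1 = G.claim 2 := by simp only [hclaim, cl]
  have hw12_1 := G.isWf 1 hm1 2 hm2 hc12 1
  have hw12_2 := G.isWf 1 hm1 2 hm2 hc12 2
  have h11 := (mem_redAtt3 G 1 1).symm.trans (hD 1 1)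
  rw [memF1] at h11
  norm_num at h11
  have h21 := (mem_redAtt3 G 2 1).symm.trans (hD 2 1)
  rw [memF1] at h21
  norm_num at h21
  have h22 := (mem_redAtt3 G 2 2).symm.trans (hD 2 2)
  rw [memF1] at h22
  norm_num at h22
  have as22 := G.pref_asymm 2 2
  tauto

lemma F1_not_4 : F1 ∉ ImageTransI 4 := by
  rintro ⟨G, htr, hG⟩
  have hargs : G.args = ({1, 2, 3, 4} : Finset ℕ) := congrArg CAF.args hG
  have hclaim : G.claim = cl := congrArg CAF.claim hG
  have hratt : redAtt 4 G = F1.att := congrArg CAF.att hG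
  have hD : ∀ a b : ℕ, (a, b) ∈ redAtt 4 G ↔ (a, b) ∈ F1.att := fun a b => by rw [hratt]
  have hm1 : (1:ℕ) ∈ G.args := by rw [hargs]; decide
  have hm2 : (2:ℕ) ∈ G.args := by rw [hargs]; decide
  have hc12 : G.claim 1 = G.claim 2 := by simp only [hclaim, cl]
  have hw12_1 := G.isWf 1 hm1 2 hm2 hc12 1
  have hw12_2 := G.isWf 1 hm1 2 hm2 hc12 2
  have h11 := (mem_redAtt4 G 1 1).symm.trans (hD 1 1)
  rw [memF1] at h11
  norm_num at h11
  have h21 := (mem_redAtt4 G 2 1).symm.trans (hD 2 1)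
  rw [memF1] at h21
  norm_num at h21
  have h22 := (mem_redAtt4 G 2 2).symm.trans (hD 2 2)
  rw [memF1] at h22
  norm_num at h22
  have as22 := G.pref_asymm 2 2
  tauto

lemma F2_not_1 : F2 ∉ ImageTransI 1 := by
  rintro ⟨G, htr, hG⟩
  have hargs : G.args = ({1, 2, 3, 4} : Finset ℕ) := congrArg CAF.args hG
  have hclaim : G.claim = cl := congrArg CAF.claim hG
  have hratt : redAtt 1 G = F2.att := congrArg CAF.att hG
  have hD : ∀ a b : ℕ, (a, b) ∈ redAtt 1 G ↔ (a, b) ∈ F2.att := fun a b => by rw [hratt]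
  have hm1 : (1:ℕ) ∈ G.args := by rw [hargs]; decide
  have hm2 : (2:ℕ) ∈ G.args := by rw [hargs]; decide
  have hc12 : G.claim 1 = G.claim 2 := by simp only [hclaim, cl]
  have hw12_2 := G.isWf 1 hm1 2 hm2 hc12 2
  have h12 := (mem_redAtt1 G 1 2).symm.trans (hD 1 2)
  rw [memF2] at h12
  norm_num at h12
  have h22 := (mem_redAtt1 G 2 2).symm.trans (hD 2 2)
  rw [memF2] at h22
  norm_num at h22
  have as22 := G.pref_asymm 2 2
  tauto

lemma F2_not_3 : F2 ∉ ImageTransI 3 := by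
  rintro ⟨G, htr, hG⟩
  have hargs : G.args = ({1, 2, 3, 4} : Finset ℕ) := congrArg CAF.args hG
  have hclaim : G.claim = cl := congrArg CAF.claim hG
  have hratt : redAtt 3 G = F2.att := congrArg CAF.att hG
  have hD : ∀ a b : ℕ, (a, b) ∈ redAtt 3 G ↔ (a, b) ∈ F2.att := fun a b => by rw [hratt]
  have hm1 : (1:ℕ) ∈ G.args := by rw [hargs]; decide
  have hm2 : (2:ℕ) ∈ G.args := by rw [hargs]; decide
  have hc12 : G.claim 1 = G.claim 2 := by simp only [hclaim, cl]
  have hw12_2 := G.isWf 1 hm1 2 hm2 hc12 2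
  have h12 := (mem_redAtt3 G 1 2).symm.trans (hD 1 2)
  rw [memF2] at h12
  norm_num at h12
  have h22 := (mem_redAtt3 G 2 2).symm.trans (hD 2 2)
  rw [memF2] at h22
  norm_num at h22
  have as22 := G.pref_asymm 2 2
  tauto

lemma F2_not_4 : F2 ∉ ImageTransI 4 := by
  rintro ⟨G, htr, hG⟩
  have hargs : G.args = ({1, 2, 3, 4} : Finset ℕ) := congrArg CAF.args hG
  have hclaim : G.claim = cl := congrArg CAF.claim hG
  have hratt : redAtt 4 G = F2.att := congrArg CAF.att hG
  have hD : ∀ a b : ℕ, (a, b) ∈ redAtt 4 G ↔ (a, b) ∈ F2.att := fun a b => by rw [hratt]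
  have hm1 : (1:ℕ) ∈ G.args := by rw [hargs]; decide
  have hm2 : (2:ℕ) ∈ G.args := by rw [hargs]; decide
  have hc12 : G.claim 1 = G.claim 2 := by simp only [hclaim, cl]
  have hw12_1 := G.isWf 1 hm1 2 hm2 hc12 1
  have hw12_2 := G.isWf 1 hm1 2 hm2 hc12 2
  have h12 := (mem_redAtt4 G 1 2).symm.trans (hD 1 2)
  rw [memF2] at h12
  norm_num at h12
  have h22 := (mem_redAtt4 G 2 2).symm.trans (hD 2 2)
  rw [memF2] at h22
  norm_num at h22
  have h21 := (mem_redAtt4 G 2 1).symm.trans (hD 2 1)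
  rw [memF2] at h21
  norm_num at h21
  have as22 := G.pref_asymm 2 2
  tauto

lemma F4_not_1 : F4 ∉ ImageTransI 1 := by
  rintro ⟨G, htr, hG⟩
  have hargs : G.args = ({1, 2, 3, 4} : Finset ℕ) := congrArg CAF.args hG
  have hclaim : G.claim = cl := congrArg CAF.claim hG
  have hratt : redAtt 1 G = F4.att := congrArg CAF.att hG
  have hD : ∀ a b : ℕ, (a, b) ∈ redAtt 1 G ↔ (a, b) ∈ F4.att := fun a b => by rw [hratt]
  have hm1 : (1:ℕ) ∈ G.args := by rw [hargs]; decide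
  have hm2 : (2:ℕ) ∈ G.args := by rw [hargs]; decide
  have hc12 : G.claim 1 = G.claim 2 := by simp only [hclaim, cl]
  have hw12_2 := G.isWf 1 hm1 2 hm2 hc12 2
  have h12 := (mem_redAtt1 G 1 2).symm.trans (hD 1 2)
  rw [memF4] at h12
  norm_num at h12
  have h22 := (mem_redAtt1 G 2 2).symm.trans (hD 2 2)
  rw [memF4] at h22
  norm_num at h22
  have as22 := G.pref_asymm 2 2
  tauto

lemma F4_not_3 : F4 ∉ ImageTransI 3 := by
  rintro ⟨G, htr, hG⟩
  have hargs : G.args = ({1, 2, 3, 4} : Finset ℕ) := congrArg CAF.args hG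
  have hclaim : G.claim = cl := congrArg CAF.claim hG
  have hratt : redAtt 3 G = F4.att := congrArg CAF.att hG
  have hD : ∀ a b : ℕ, (a, b) ∈ redAtt 3 G ↔ (a, b) ∈ F4.att := fun a b => by rw [hratt]
  have hm1 : (1:ℕ) ∈ G.args := by rw [hargs]; decide
  have hm2 : (2:ℕ) ∈ G.args := by rw [hargs]; decide
  have hc12 : G.claim 1 = G.claim 2 := by simp only [hclaim, cl]
  have hw12_2 := G.isWf 1 hm1 2 hm2 hc12 2
  have h12 := (mem_redAtt3 G 1 2).symm.trans (hD 1 2)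
  rw [memF4] at h12
  norm_num at h12
  have h22 := (mem_redAtt3 G 2 2).symm.trans (hD 2 2)
  rw [memF4] at h22
  norm_num at h22
  have as22 := G.pref_asymm 2 2
  tauto

lemma F4_not_2 : F4 ∉ ImageTransI 2 := by
  rintro ⟨G, htr, hG⟩
  have hargs : G.args = ({1, 2, 3, 4} : Finset ℕ) := congrArg CAF.args hG
  have hclaim : G.claim = cl := congrArg CAF.claim hG
  have hratt : redAtt 2 G = F4.att := congrArg CAF.att hG
  have hD : ∀ a b : ℕ, (a, b) ∈ redAtt 2 G ↔ (a, b) ∈ F4.att := fun a b => by rw [hratt]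
  have hm1 : (1:ℕ) ∈ G.args := by rw [hargs]; decide
  have hm2 : (2:ℕ) ∈ G.args := by rw [hargs]; decide
  have hc12 : G.claim 1 = G.claim 2 := by simp only [hclaim, cl]
  have hw12_2 := G.isWf 1 hm1 2 hm2 hc12 2
  have h12 := (mem_redAtt2 G 1 2).symm.trans (hD 1 2)
  rw [memF4] at h12
  norm_num at h12
  have h22 := (mem_redAtt2 G 2 2).symm.trans (hD 2 2)
  rw [memF4] at h22
  norm_num at h22
  have h21 := (mem_redAtt2 G 2 1).symm.trans (hD 2 1)
  rw [memF4] at h21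
  norm_num at h21
  have as22 := G.pref_asymm 2 2
  have as12 := G.pref_asymm 1 2
  tauto

lemma F3_not_1 : F3 ∉ ImageTransI 1 := by
  rintro ⟨G, htr, hG⟩
  have hargs : G.args = ({1, 2, 3, 4} : Finset ℕ) := congrArg CAF.args hG
  have hclaim : G.claim = cl := congrArg CAF.claim hG
  have hratt : redAtt 1 G = F3.att := congrArg CAF.att hG
  have hD : ∀ a b : ℕ, (a, b) ∈ redAtt 1 G ↔ (a, b) ∈ F3.att := fun a b => by rw [hratt]
  have hm1 : (1:ℕ) ∈ G.args := by rw [hargs]; decide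
  have hm2 : (2:ℕ) ∈ G.args := by rw [hargs]; decide
  have hm3 : (3:ℕ) ∈ G.args := by rw [hargs]; decide
  have hc12 : G.claim 1 = G.claim 2 := by simp only [hclaim, cl]
  have hw12_1 := G.isWf 1 hm1 2 hm2 hc12 1
  have hw12_3 := G.isWf 1 hm1 2 hm2 hc12 3
  have h23 := (mem_redAtt1 G 2 3).symm.trans (hD 2 3)
  rw [memF3] at h23
  norm_num at h23
  have h13 := (mem_redAtt1 G 1 3).symm.trans (hD 1 3)
  rw [memF3] at h13
  norm_num at h13
  have h11 := (mem_redAtt1 G 1 1).symm.trans (hD 1 1)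
  rw [memF3] at h11
  norm_num at h11
  have h21 := (mem_redAtt1 G 2 1).symm.trans (hD 2 1)
  rw [memF3] at h21
  norm_num at h21
  have t312 : G.pref 3 1 → G.pref 1 2 → G.pref 3 2 := fun h h' => htr h h'
  tauto

set_option maxHeartbeats 2000000 in
lemma F3_not_2 : F3 ∉ ImageTransI 2 := by
  rintro ⟨G, htr, hG⟩
  have hargs : G.args = ({1, 2, 3, 4} : Finset ℕ) := congrArg CAF.args hG
  have hclaim : G.claim = cl := congrArg CAF.claim hG
  have hratt : redAtt 2 G = F3.att := congrArg CAF.att hG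
  have hD : ∀ a b : ℕ, (a, b) ∈ redAtt 2 G ↔ (a, b) ∈ F3.att := fun a b => by rw [hratt]
  have hm1 : (1:ℕ) ∈ G.args := by rw [hargs]; decide
  have hm2 : (2:ℕ) ∈ G.args := by rw [hargs]; decide
  have hm3 : (3:ℕ) ∈ G.args := by rw [hargs]; decide
  have hc12 : G.claim 1 = G.claim 2 := by simp only [hclaim, cl]
  have hw12_1 := G.isWf 1 hm1 2 hm2 hc12 1
  have hw12_3 := G.isWf 1 hm1 2 hm2 hc12 3
  have h11 := (mem_redAtt2 G 1 1).symm.trans (hD 1 1)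
  rw [memF3] at h11
  norm_num at h11
  have h21 := (mem_redAtt2 G 2 1).symm.trans (hD 2 1)
  rw [memF3] at h21
  norm_num at h21
  have h31 := (mem_redAtt2 G 3 1).symm.trans (hD 3 1)
  rw [memF3] at h31
  norm_num at h31
  have h23 := (mem_redAtt2 G 2 3).symm.trans (hD 2 3)
  rw [memF3] at h23
  norm_num at h23
  have h13 := (mem_redAtt2 G 1 3).symm.trans (hD 1 3)
  rw [memF3] at h13
  norm_num at h13
  have as31 := G.pref_asymm 3 1
  have t312 : G.pref 3 1 → G.pref 1 2 → G.pref 3 2 := fun h h' => htr h h'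
  have t123 : G.pref 1 2 → G.pref 2 3 → G.pref 1 3 := fun h h' => htr h h'
  tauto

lemma F3_not_4 : F3 ∉ ImageTransI 4 := by
  rintro ⟨G, htr, hG⟩
  have hargs : G.args = ({1, 2, 3, 4} : Finset ℕ) := congrArg CAF.args hG
  have hclaim : G.claim = cl := congrArg CAF.claim hG
  have hratt : redAtt 4 G = F3.att := congrArg CAF.att hG
  have hD : ∀ a b : ℕ, (a, b) ∈ redAtt 4 G ↔ (a, b) ∈ F3.att := fun a b => by rw [hratt]
  have hE : ∀ a b : ℕ, (((a, b) ∈ G.att ∧ ¬ G.pref b a) ∨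
      ((b, a) ∈ G.att ∧ (a, b) ∉ G.att ∧ G.pref a b) ∨
      ((a, b) ∈ G.att ∧ (b, a) ∉ G.att)) ↔ (a, b) ∈ F3.att :=
    fun a b => (mem_redAtt4 G a b).symm.trans (hD a b)
  have hm1 : (1:ℕ) ∈ G.args := by rw [hargs]; decide
  have hm2 : (2:ℕ) ∈ G.args := by rw [hargs]; decide
  have hm3 : (3:ℕ) ∈ G.args := by rw [hargs]; decide
  have hm4 : (4:ℕ) ∈ G.args := by rw [hargs]; decide
  have hc12 : G.claim 1 = G.claim 2 := by simp only [hclaim, cl]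
  have hc34 : G.claim 3 = G.claim 4 := by simp only [hclaim, cl]
  have hw12_1 := G.isWf 1 hm1 2 hm2 hc12 1
  have hw12_3 := G.isWf 1 hm1 2 hm2 hc12 3
  have hw12_4 := G.isWf 1 hm1 2 hm2 hc12 4
  have hw34_1 := G.isWf 3 hm3 4 hm4 hc34 1
  have hw34_2 := G.isWf 3 hm3 4 hm4 hc34 2
  have t312 : G.pref 3 1 → G.pref 1 2 → G.pref 3 2 := fun h h' => htr h h'
  have t123 : G.pref 1 2 → G.pref 2 3 → G.pref 1 3 := fun h h' => htr h h'
  -- negative facts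
  have hN21 : ¬ _ := fun hx => by have := ((hE 2 1).trans (memF3 2 1)).mp hx; omega
  have hN13 : ¬ _ := fun hx => by have := ((hE 1 3).trans (memF3 1 3)).mp hx; omega
  have hN42 : ¬ _ := fun hx => by have := ((hE 4 2).trans (memF3 4 2)).mp hx; omega
  have hN14 : ¬ _ := fun hx => by have := ((hE 1 4).trans (memF3 1 4)).mp hx; omega
  have hN32 : ¬ _ := fun hx => by have := ((hE 3 2).trans (memF3 3 2)).mp hx; omega
  -- positive facts
  have H11 := (hE 1 1).mpr ((memF3 1 1).mpr (by norm_num))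
  have H23 := (hE 2 3).mpr ((memF3 2 3).mpr (by norm_num))
  have A11 : ((1:ℕ), (1:ℕ)) ∈ G.att := by
    rcases H11 with ⟨h, -⟩ | ⟨h, -⟩ | ⟨h, -⟩ <;> exact h
  have A21 : ((2:ℕ), (1:ℕ)) ∈ G.att := hw12_1.mp A11
  have P12 : G.pref 1 2 := by
    by_contra hp
    exact hN21 (Or.inl ⟨A21, hp⟩)
  rcases H23 with ⟨A23, hnP32⟩ | ⟨A32, hnA23, P23⟩ | ⟨A23, hnA32⟩
  · -- (2,3) ∈ R, ¬ 3 ≻ 2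
    have A13 := hw12_3.mpr A23
    have P31 : G.pref 3 1 := by
      by_contra hp
      exact hN13 (Or.inl ⟨A13, hp⟩)
    exact hnP32 (t312 P31 P12)
  · -- reversal: (3,2) ∈ R, (2,3) ∉ R, 2 ≻ 3
    have A42 := hw34_2.mp A32
    have P24 : G.pref 2 4 := by
      by_contra hp
      exact hN42 (Or.inl ⟨A42, hp⟩)
    have A24 : ((2:ℕ), (4:ℕ)) ∈ G.att := by
      by_contra ha
      exact hN42 (Or.inr (Or.inr ⟨A42, ha⟩))
    have A14 := hw12_4.mpr A24
    have P41 : G.pref 4 1 := by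
      by_contra hp
      exact hN14 (Or.inl ⟨A14, hp⟩)
    have A41 : ((4:ℕ), (1:ℕ)) ∈ G.att := by
      by_contra ha
      exact hN14 (Or.inr (Or.inr ⟨A14, ha⟩))
    have A31 := hw34_1.mpr A41
    have hnA13 : ((1:ℕ), (3:ℕ)) ∉ G.att := fun h => hnA23 (hw12_3.mp h)
    exact hN13 (Or.inr (Or.inl ⟨A31, hnA13, t123 P12 P23⟩))
  · -- (2,3) ∈ R, (3,2) ∉ R
    have A13 := hw12_3.mpr A23
    have P31 : G.pref 3 1 := by
      by_contra hp
      exact hN13 (Or.inl ⟨A13, hp⟩)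
    exact hN32 (Or.inr (Or.inl ⟨A23, hnA32, t312 P31 P12⟩))

end Stmt7

/-- For all `i, j ∈ {1,2,3,4}` with `i ≠ j`, the class `ImageTrans_i`
is not a subclass of `ImageTrans_j`. -/
theorem stmt_7 :
    ∀ i ∈ ({1, 2, 3, 4} : Set ℕ), ∀ j ∈ ({1, 2, 3, 4} : Set ℕ), i ≠ j →
      ¬ ImageTransI i ⊆ ImageTransI j := by
  intro i hi j hj hne hsub
  simp only [Set.mem_insert_iff, Set.mem_singleton_iff] at hi hj
  rcases hi with rfl|rfl|rfl|rfl <;> rcases hj with rfl|rfl|rfl|rfl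
  · exact hne rfl
  · exact Stmt7.F1_not_2 (hsub Stmt7.memTI1)
  · exact Stmt7.F1_not_3 (hsub Stmt7.memTI1)
  · exact Stmt7.F1_not_4 (hsub Stmt7.memTI1)
  · exact Stmt7.F2_not_1 (hsub Stmt7.memTI2)
  · exact hne rfl
  · exact Stmt7.F2_not_3 (hsub Stmt7.memTI2)
  · exact Stmt7.F2_not_4 (hsub Stmt7.memTI2)
  · exact Stmt7.F3_not_1 (hsub Stmt7.memTI3)
  · exact Stmt7.F3_not_2 (hsub Stmt7.memTI3)
  · exact hne rfl
  · exact Stmt7.F3_not_4 (hsub Stmt7.memTI3)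
  · exact Stmt7.F4_not_1 (hsub Stmt7.memTI4)
  · exact Stmt7.F4_not_2 (hsub Stmt7.memTI4)
  · exact Stmt7.F4_not_3 (hsub Stmt7.memTI4)
  · exact hne rfl
end

section
/- A CAF F belongs to ImageTrans_1 (i.e. F = Red_1(F') for some PCAF F' with transitive preferences) if and only if (1) the directed graph wfp(F) is acyclic, and (2) whenever (a,b) is an attack of F there is no directed path from a to b in wfp(F). -/
/-- Characterization of `ImageTrans_1`: a CAF `F` belongs to `ImageTrans_1` iff
(1) the directed graph `wfp(F)` is acyclic (no vertex has a directed path of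
positive length back to itself), and (2) whenever `(a,b)` is an attack of `F`
there is no directed path from `a` to `b` in `wfp(F)`. -/
theorem stmt_8 (F : CAF) :
    F ∈ ImageTransI 1 ↔
      ((∀ a : ℕ, ¬ Relation.TransGen (fun x y => (x, y) ∈ F.wfp) a a) ∧
       (∀ a b : ℕ, (a, b) ∈ F.att →
          ¬ Relation.TransGen (fun x y => (x, y) ∈ F.wfp) a b)) := by
  constructor
  · rintro ⟨G, htrans, rfl⟩
    have key : ∀ x y : ℕ, (x, y) ∈ (Red 1 G).wfp → G.pref y x := by
      intro x y hxy
      obtain ⟨hx, hy, hnot, a', ha', hc, hatt⟩ := hxy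
      have hatt' : (a', y) ∈ G.att ∧ ¬ G.pref y a' := by
        simpa [Red, redAtt] using hatt
      have hxatt : (x, y) ∈ G.att :=
        ((G.isWf a' ha' x hx hc) y).mp hatt'.1
      have hnot' : ¬ ((x, y) ∈ G.att ∧ ¬ G.pref y x) := by
        simpa [Red, redAtt] using hnot
      by_contra hp
      exact hnot' ⟨hxatt, hp⟩
    have keyT : ∀ x y : ℕ,
        Relation.TransGen (fun a b => (a, b) ∈ (Red 1 G).wfp) x y → G.pref y x := by
      intro x y h
      have h' : Relation.TransGen (fun a b => G.pref b a) x y :=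
        Relation.TransGen.mono key _ _ h
      have ht : Transitive (fun a b : ℕ => G.pref b a) :=
        fun a b c hab hbc => htrans hbc hab
      rwa [@Relation.transGen_eq_self _ (fun a b : ℕ => G.pref b a) ⟨fun _ _ _ h1 h2 => ht h1 h2⟩] at h'
    constructor
    · intro a h
      exact G.pref_asymm _ _ (keyT a a h) (keyT a a h)
    · intro a b hab h
      have hp := keyT a b h
      have : (a, b) ∈ G.att ∧ ¬ G.pref b a := by
        simpa [Red, redAtt] using hab
      exact this.2 hp
  · rintro ⟨h1, h2⟩
    have Edom : ∀ x y : ℕ, (x, y) ∈ F.wfp → x ∈ F.args ∧ y ∈ F.args :=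
      fun x y h => ⟨h.1, h.2.1⟩
    have hRwf1 : ∀ a ∈ F.args, ∀ b ∈ F.args, F.claim a = F.claim b →
        ∀ c, (a, c) ∈ F.att ∪ F.wfp → (b, c) ∈ F.att ∪ F.wfp := by
      intro a ha b hb hcl c hac
      have : ∃ a' ∈ F.args, F.claim a' = F.claim a ∧ (a', c) ∈ F.att := by
        rcases hac with h | h
        · exact ⟨a, ha, rfl, h⟩
        · obtain ⟨-, -, -, a', ha', hc', hatt⟩ := h
          exact ⟨a', ha', hc', hatt⟩
      obtain ⟨a', ha', hc', hatt⟩ := this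
      have hcarg : c ∈ F.args := (F.att_dom _ hatt).2
      by_cases hbc : (b, c) ∈ F.att
      · exact Or.inl hbc
      · exact Or.inr ⟨hb, hcarg, hbc, a', ha', hc'.trans hcl, hatt⟩
    refine ⟨{
      args := F.args
      att := F.att ∪ F.wfp
      claim := F.claim
      att_dom := by
        rintro p (hp | hp)
        · exact F.att_dom p hp
        · exact ⟨hp.1, hp.2.1⟩
      pref := fun x y => Relation.TransGen (fun u v => (u, v) ∈ F.wfp) y x
      pref_dom := by
        intro a b h
        induction h with
        | single h' => exact ⟨(Edom _ _ h').2, (Edom _ _ h').1⟩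
        | tail _ h' ih => exact ⟨(Edom _ _ h').2, ih.2⟩
      pref_asymm := by
        intro a b hab hba
        exact h1 a (hba.trans hab)
      isWf := fun a ha b hb hcl c =>
        ⟨hRwf1 a ha b hb hcl c, hRwf1 b hb a ha hcl.symm c⟩ }, ?_, ?_⟩
    · intro a b c hab hbc
      exact hbc.trans hab
    · refine CAF.ext' rfl ?_ rfl
      show redAtt 1 _ = F.att
      ext p
      simp only [redAtt, if_pos rfl, Set.mem_setOf_eq]
      constructor
      · rintro ⟨hR | hR, hnp⟩
        · exact hR
        · exact (hnp (Relation.TransGen.single hR)).elim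
      · intro hp
        exact ⟨Or.inl hp, fun h => h2 p.1 p.2 hp h⟩
end

section
/- The preference-claim-based semantics prf_p^3, stb_p^3 and sem_p^3 are I-maximal for PCAFs: for every PCAF F, σ ∈ {prf, stb, sem}, and all S,T ∈ σ_p^3(F), S ⊆ T implies S = T. -/
namespace AuxIMax

lemma red3_sub (F : PCAF) {p : ℕ × ℕ} (h : p ∈ (Red 3 F).att) : p ∈ F.att := by
  simp only [Red, redAtt] at h
  norm_num at h
  tauto

lemma conflict_pres (F : PCAF) {a b : ℕ} (h : (a, b) ∈ F.att) :
    (a, b) ∈ (Red 3 F).att ∨ (b, a) ∈ (Red 3 F).att := by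
  by_cases hba : (b, a) ∈ F.att
  · by_cases hp : F.pref b a
    · right
      have hnp := F.pref_asymm b a hp
      simp only [Red, redAtt]
      norm_num
      tauto
    · left
      simp only [Red, redAtt]
      norm_num
      tauto
  · left
    simp only [Red, redAtt]
    norm_num
    tauto

lemma no_cross (F : PCAF) {E E' : Set ℕ} (hE : (Red 3 F).adm E) (hE' : (Red 3 F).adm E')
    (hc : F.claim '' E ⊆ F.claim '' E') :
    ∀ x ∈ E', ∀ y ∈ E, (x, y) ∉ (Red 3 F).att := by
  intro x hx y hy hxy
  obtain ⟨z, hz, hzx⟩ := hE.2 y hy x hxy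
  obtain ⟨z', hz', hcl⟩ := hc ⟨z, hz, rfl⟩
  have hzR : (z, x) ∈ F.att := red3_sub F hzx
  have hza : z ∈ F.args := (F.att_dom _ hzR).1
  have hz'a : z' ∈ F.args := by
    have := hE'.1.1 hz'
    simpa [Red] using this
  have hz'R : (z', x) ∈ F.att := ((F.isWf z' hz'a z hza hcl) x).mpr hzR
  rcases conflict_pres F hz'R with h | h
  · exact hE'.1.2 z' hz' x hx h
  · exact hE'.1.2 x hx z' hz' h

lemma union_adm (F : PCAF) {E E' : Set ℕ} (hE : (Red 3 F).adm E) (hE' : (Red 3 F).adm E')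
    (hc : F.claim '' E ⊆ F.claim '' E') : (Red 3 F).adm (E ∪ E') := by
  have hnc := no_cross F hE hE' hc
  constructor
  · constructor
    · exact Set.union_subset hE.1.1 hE'.1.1
    · rintro a (ha | ha) b (hb | hb) hab
      · exact hE.1.2 a ha b hb hab
      · obtain ⟨z', hz', hz'a⟩ := hE'.2 b hb a hab
        exact hnc z' hz' a ha hz'a
      · exact hnc a ha b hb hab
      · exact hE'.1.2 a ha b hb hab
  · rintro a (ha | ha) b hba
    · obtain ⟨z, hz, h⟩ := hE.2 a ha b hba
      exact ⟨z, Or.inl hz, h⟩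
    · obtain ⟨z, hz, h⟩ := hE'.2 a ha b hba
      exact ⟨z, Or.inr hz, h⟩

lemma stb_adm (G : CAF) {E : Set ℕ} (h : G.stb E) : G.adm E := by
  refine ⟨h.1, ?_⟩
  intro a ha b hba
  have hb : b ∈ G.args := (G.att_dom _ hba).1
  have hbE : b ∉ E := fun hbE => h.1.2 b hbE a ha hba
  exact h.2 b hb hbE

lemma range_mono (G : CAF) {S T : Set ℕ} (h : S ⊆ T) : G.range S ⊆ G.range T := by
  rintro x (hx | ⟨a, ha, hax⟩)
  · exact Or.inl (h hx)
  · exact Or.inr ⟨a, h ha, hax⟩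

end AuxIMax

/-- `prf_p^3`, `stb_p^3` and `sem_p^3` are I-maximal for PCAFs. -/
theorem stmt_10 :
    ∀ σ ∈ ({CAF.prf, CAF.stb, CAF.sem} : Set (CAF → Set ℕ → Prop)),
      ∀ F : PCAF, ∀ S ∈ prefSem σ 3 F, ∀ T ∈ prefSem σ 3 F, S ⊆ T → S = T := by
  intro σ hσ F
  simp only [Set.mem_insert_iff, Set.mem_singleton_iff] at hσ
  rcases hσ with rfl | rfl | rfl
  · -- preferred
    rintro S ⟨E, ⟨hEadm, hEmax⟩, rfl⟩ T ⟨E', ⟨hE'adm, hE'max⟩, rfl⟩ hST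
    have hU := AuxIMax.union_adm F hEadm hE'adm hST
    have h1 : E = E ∪ E' := by
      by_contra h
      exact hEmax ⟨E ∪ E', hU, Set.subset_union_left.ssubset_of_ne h⟩
    have h2 : E' = E ∪ E' := by
      by_contra h
      exact hE'max ⟨E ∪ E', hU, Set.subset_union_right.ssubset_of_ne h⟩
    rw [h1.trans h2.symm]
  · -- stable
    rintro S ⟨E, hE, rfl⟩ T ⟨E', hE', rfl⟩ hST
    have hU := AuxIMax.union_adm F (AuxIMax.stb_adm _ hE) (AuxIMax.stb_adm _ hE') hST
    have hEE' : E = E' := by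
      apply Set.Subset.antisymm
      · intro a ha
        by_contra haE'
        have haarg : a ∈ F.args := by
          have := hE.1.1 ha
          simpa [Red] using this
        obtain ⟨s, hs, hsa⟩ := hE'.2 a haarg haE'
        exact hU.1.2 s (Or.inr hs) a (Or.inl ha) hsa
      · intro a ha
        by_contra haE
        have haarg : a ∈ F.args := by
          have := hE'.1.1 ha
          simpa [Red] using this
        obtain ⟨s, hs, hsa⟩ := hE.2 a haarg haE
        exact hU.1.2 s (Or.inl hs) a (Or.inr ha) hsa
    rw [hEE']
  · -- semi-stable
    rintro S ⟨E, ⟨hEadm, hEmax⟩, rfl⟩ T ⟨E', ⟨hE'adm, hE'max⟩, rfl⟩ hST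
    have hU := AuxIMax.union_adm F hEadm hE'adm hST
    have h1 : (Red 3 F).range E = (Red 3 F).range (E ∪ E') := by
      by_contra h
      exact hEmax ⟨E ∪ E', hU,
        (AuxIMax.range_mono _ Set.subset_union_left).ssubset_of_ne h⟩
    have h2 : (Red 3 F).range E' = (Red 3 F).range (E ∪ E') := by
      by_contra h
      exact hE'max ⟨E ∪ E', hU,
        (AuxIMax.range_mono _ Set.subset_union_right).ssubset_of_ne h⟩
    have hr : (Red 3 F).range E = (Red 3 F).range E' := h1.trans h2.symm
    have hEE' : E = E' := by
      apply Set.Subset.antisymm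
      · intro a ha
        have : a ∈ (Red 3 F).range E' := hr ▸ Or.inl ha
        rcases this with h | ⟨s, hs, hsa⟩
        · exact h
        · exact absurd hsa (hU.1.2 s (Or.inr hs) a (Or.inl ha))
      · intro a ha
        have : a ∈ (Red 3 F).range E := hr.symm ▸ Or.inl ha
        rcases this with h | ⟨s, hs, hsa⟩
        · exact h
        · exact absurd hsa (hU.1.2 s (Or.inl hs) a (Or.inr ha))
    rw [hEE']
end

section
/- The semantics stg_p^3 is not I-maximal for PCAFs, even when restricted to PCAFs with transitive preferences: there exists a PCAF F with transitive preference relation and sets of claims S,T ∈ stg_p^3(F) with S ⊊ T. In particular, this is witnessed by the PCAF F' with arguments a, a', b, c, claims claim(a)=claim(a')=α, claim(b)=β, claim(c)=γ, attacks {(a,b),(b,c),(c,a),(a',b),(b,a')} and preference b ≻ a', for which stg_p^3(F') = {{α},{α,γ},{β}}. -/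
/-! ### Auxiliary construction for `stmt_11` -/

/-- The witness PCAF. -/
def Fw : PCAF where
  args := {0, 1, 2, 3}
  att := {(0, 2), (2, 3), (3, 0), (1, 2), (2, 1)}
  claim := fun n => if n ≤ 1 then 0 else n - 1
  att_dom := by
    rintro ⟨a, b⟩ hp
    simp only [Set.mem_insert_iff, Set.mem_singleton_iff, Prod.mk.injEq] at hp
    simp only [Finset.mem_insert, Finset.mem_singleton]
    omega
  pref := fun x y => x = 2 ∧ y = 1
  pref_dom := by rintro a b ⟨rfl, rfl⟩; simp
  pref_asymm := by rintro a b ⟨rfl, rfl⟩ ⟨h, _⟩; omega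
  isWf := by
    intro a ha b hb hcl c
    simp only [Finset.mem_insert, Finset.mem_singleton] at ha hb
    have : a = b ∨ (a = 0 ∧ b = 1) ∨ (a = 1 ∧ b = 0) := by
      rcases ha with rfl | rfl | rfl | rfl <;> rcases hb with rfl | rfl | rfl | rfl <;>
        first | omega | exact absurd hcl (by decide)
    rcases this with rfl | ⟨rfl, rfl⟩ | ⟨rfl, rfl⟩
    · rfl
    · show (0, c) ∈ ({(0, 2), (2, 3), (3, 0), (1, 2), (2, 1)} : Set (ℕ × ℕ)) ↔
        (1, c) ∈ ({(0, 2), (2, 3), (3, 0), (1, 2), (2, 1)} : Set (ℕ × ℕ))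
      simp only [Set.mem_insert_iff, Set.mem_singleton_iff, Prod.mk.injEq]
      tauto
    · show (1, c) ∈ ({(0, 2), (2, 3), (3, 0), (1, 2), (2, 1)} : Set (ℕ × ℕ)) ↔
        (0, c) ∈ ({(0, 2), (2, 3), (3, 0), (1, 2), (2, 1)} : Set (ℕ × ℕ))
      simp only [Set.mem_insert_iff, Set.mem_singleton_iff, Prod.mk.injEq]
      tauto

lemma Fw_att : Fw.att = ({(0, 2), (2, 3), (3, 0), (1, 2), (2, 1)} : Set (ℕ × ℕ)) := rfl

lemma Fw_pref : ∀ x y : ℕ, Fw.pref x y ↔ (x = 2 ∧ y = 1) := fun _ _ => Iff.rfl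

lemma Fw_trans : Transitive Fw.pref := by
  rintro a b c ⟨rfl, rfl⟩ ⟨h, _⟩; exact absurd h (by norm_num)

lemma G_att : (Red 3 Fw).att = ({(0, 2), (2, 3), (3, 0), (2, 1)} : Set (ℕ × ℕ)) := by
  show redAtt 3 Fw = _
  unfold redAtt
  norm_num
  ext ⟨a, b⟩
  simp only [Set.mem_setOf_eq, Fw_att, Fw_pref, Set.mem_insert_iff,
    Set.mem_singleton_iff, Prod.mk.injEq]
  omega

lemma G_args : (Red 3 Fw).args = ({0, 1, 2, 3} : Finset ℕ) := rfl

lemma G_claim : (Red 3 Fw).claim = fun n => if n ≤ 1 then 0 else n - 1 := rfl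

/-- membership in redAtt in convenient form -/
lemma G_att_iff (a b : ℕ) :
    (a, b) ∈ (Red 3 Fw).att ↔
      (a = 0 ∧ b = 2) ∨ (a = 2 ∧ b = 3) ∨ (a = 3 ∧ b = 0) ∨ (a = 2 ∧ b = 1) := by
  rw [G_att]
  simp only [Set.mem_insert_iff, Set.mem_singleton_iff, Prod.mk.injEq]

lemma range_eq (S : Set ℕ) :
    (Red 3 Fw).range S = S ∪ {b | ∃ a ∈ S, (a, b) ∈ (Red 3 Fw).att} := rfl

lemma mem_args_iff (x : ℕ) : x ∈ (Red 3 Fw).args ↔ x = 0 ∨ x = 1 ∨ x = 2 ∨ x = 3 := by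
  rw [G_args]
  simp only [Finset.mem_insert, Finset.mem_singleton]

lemma cf01 : (Red 3 Fw).cf {0, 1} := by
  constructor
  · intro x hx
    simp only [Set.mem_insert_iff, Set.mem_singleton_iff] at hx
    rw [Finset.mem_coe, mem_args_iff]; omega
  · intro a ha b hb hab
    simp only [Set.mem_insert_iff, Set.mem_singleton_iff] at ha hb
    rw [G_att_iff] at hab; omega

lemma cf13 : (Red 3 Fw).cf {1, 3} := by
  constructor
  · intro x hx
    simp only [Set.mem_insert_iff, Set.mem_singleton_iff] at hx
    rw [Finset.mem_coe, mem_args_iff]; omega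
  · intro a ha b hb hab
    simp only [Set.mem_insert_iff, Set.mem_singleton_iff] at ha hb
    rw [G_att_iff] at hab; omega

lemma cf2 : (Red 3 Fw).cf {2} := by
  constructor
  · intro x hx
    simp only [Set.mem_singleton_iff] at hx
    rw [Finset.mem_coe, mem_args_iff]; omega
  · intro a ha b hb hab
    simp only [Set.mem_singleton_iff] at ha hb
    rw [G_att_iff] at hab; omega

lemma range01 : (Red 3 Fw).range {0, 1} = {0, 1, 2} := by
  ext x
  simp only [range_eq, Set.mem_union, Set.mem_setOf_eq, Set.mem_insert_iff,
    Set.mem_singleton_iff]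
  constructor
  · rintro (h | ⟨a, ha, hab⟩)
    · omega
    · rw [G_att_iff] at hab
      omega
  · rintro (rfl | rfl | rfl)
    · exact Or.inl (by norm_num)
    · exact Or.inl (by norm_num)
    · exact Or.inr ⟨0, by norm_num, by rw [G_att_iff]; norm_num⟩

lemma range13 : (Red 3 Fw).range {1, 3} = {0, 1, 3} := by
  ext x
  simp only [range_eq, Set.mem_union, Set.mem_setOf_eq, Set.mem_insert_iff,
    Set.mem_singleton_iff]
  constructor
  · rintro (h | ⟨a, ha, hab⟩)
    · omega
    · rw [G_att_iff] at hab
      omega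
  · rintro (rfl | rfl | rfl)
    · exact Or.inr ⟨3, by norm_num, by rw [G_att_iff]; norm_num⟩
    · exact Or.inl (by norm_num)
    · exact Or.inl (by norm_num)

lemma range2 : (Red 3 Fw).range {2} = {1, 2, 3} := by
  ext x
  simp only [range_eq, Set.mem_union, Set.mem_setOf_eq, Set.mem_insert_iff,
    Set.mem_singleton_iff]
  constructor
  · rintro (h | ⟨a, ha, hab⟩)
    · omega
    · rw [G_att_iff] at hab
      omega
  · rintro (rfl | rfl | rfl)
    · exact Or.inr ⟨2, rfl, by rw [G_att_iff]; norm_num⟩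
    · exact Or.inl rfl
    · exact Or.inr ⟨2, rfl, by rw [G_att_iff]; norm_num⟩

lemma range0 : (Red 3 Fw).range {0} = {0, 2} := by
  ext x
  simp only [range_eq, Set.mem_union, Set.mem_setOf_eq, Set.mem_insert_iff,
    Set.mem_singleton_iff]
  constructor
  · rintro (h | ⟨a, ha, hab⟩)
    · omega
    · rw [G_att_iff] at hab
      omega
  · rintro (rfl | rfl)
    · exact Or.inl rfl
    · exact Or.inr ⟨0, rfl, by rw [G_att_iff]; norm_num⟩

lemma range1 : (Red 3 Fw).range {1} = {1} := by
  ext x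
  simp only [range_eq, Set.mem_union, Set.mem_setOf_eq, Set.mem_singleton_iff]
  constructor
  · rintro (h | ⟨a, ha, hab⟩)
    · exact h
    · rw [G_att_iff] at hab
      omega
  · rintro rfl; exact Or.inl rfl

lemma range3 : (Red 3 Fw).range {3} = {0, 3} := by
  ext x
  simp only [range_eq, Set.mem_union, Set.mem_setOf_eq, Set.mem_insert_iff,
    Set.mem_singleton_iff]
  constructor
  · rintro (h | ⟨a, ha, hab⟩)
    · omega
    · rw [G_att_iff] at hab
      omega
  · rintro (rfl | rfl)
    · exact Or.inr ⟨3, rfl, by rw [G_att_iff]; norm_num⟩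
    · exact Or.inl rfl

lemma rangeEmpty : (Red 3 Fw).range (∅ : Set ℕ) = ∅ := by
  ext x
  simp [range_eq]

/-- No conflict-free set has full range. -/
lemma noFull (T : Set ℕ) (hT : (Red 3 Fw).cf T) :
    ¬ ({0, 1, 2, 3} : Set ℕ) ⊆ (Red 3 Fw).range T := by
  intro hfull
  have mem_range : ∀ x, x ∈ ({0,1,2,3} : Set ℕ) →
      x ∈ T ∨ ∃ a ∈ T, (a, x) ∈ (Red 3 Fw).att := fun x hx => hfull hx
  have h2 := mem_range 2 (by norm_num)
  have h0 := mem_range 0 (by norm_num)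
  have h3 := mem_range 3 (by norm_num)
  have hcf := hT.2
  -- attacker analysis
  have att2 : 2 ∈ T ∨ 0 ∈ T := by
    rcases h2 with h | ⟨a, ha, hab⟩
    · exact Or.inl h
    · rw [G_att_iff] at hab
      rcases hab with ⟨rfl, _⟩ | ⟨_, h⟩ | ⟨_, h⟩ | ⟨_, h⟩ <;> first | exact Or.inr ha | omega
  have att0 : 0 ∈ T ∨ 3 ∈ T := by
    rcases h0 with h | ⟨a, ha, hab⟩
    · exact Or.inl h
    · rw [G_att_iff] at hab
      rcases hab with ⟨_, h⟩ | ⟨_, h⟩ | ⟨rfl, _⟩ | ⟨_, h⟩ <;> first | exact Or.inr ha | omega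
  have att3 : 3 ∈ T ∨ 2 ∈ T := by
    rcases h3 with h | ⟨a, ha, hab⟩
    · exact Or.inl h
    · rw [G_att_iff] at hab
      rcases hab with ⟨_, h⟩ | ⟨rfl, _⟩ | ⟨_, h⟩ | ⟨_, h⟩ <;> first | exact Or.inr ha | omega
  rcases att2 with h2T | h0T
  · -- 2 ∈ T, so 0 ∉ T and 3 ∉ T
    have : 3 ∈ T → False := fun h => hcf 2 h2T 3 h ((G_att_iff 2 3).2 (by norm_num))
    have h0T : 0 ∈ T := by tauto
    exact hcf 0 h0T 2 h2T ((G_att_iff 0 2).2 (by norm_num))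
  · -- 0 ∈ T, so 3 ∉ T (3 attacks 0), so 2 ∈ T from att3, but 0 attacks 2
    have h3T : 3 ∈ T → False := fun h => hcf 3 h 0 h0T ((G_att_iff 3 0).2 (by norm_num))
    have h2T : 2 ∈ T := by tauto
    exact hcf 0 h0T 2 h2T ((G_att_iff 0 2).2 (by norm_num))

lemma range_sub (T : Set ℕ) (hT : (Red 3 Fw).cf T) :
    (Red 3 Fw).range T ⊆ ({0, 1, 2, 3} : Set ℕ) := by
  intro x hx
  rw [range_eq, Set.mem_union, Set.mem_setOf_eq] at hx
  rcases hx with h | ⟨a, _, hab⟩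
  · have := hT.1 h
    rw [Finset.mem_coe, mem_args_iff] at this
    simp only [Set.mem_insert_iff, Set.mem_singleton_iff]
    exact this
  · rw [G_att_iff] at hab
    simp only [Set.mem_insert_iff, Set.mem_singleton_iff]
    omega

lemma stg_of_range3 (S : Set ℕ) (hcf : (Red 3 Fw).cf S)
    (h3 : (Red 3 Fw).range S ⊆ ({0,1,2,3} : Set ℕ))
    (hmiss : ∀ T, (Red 3 Fw).cf T → (Red 3 Fw).range S ⊂ (Red 3 Fw).range T →
      ({0,1,2,3} : Set ℕ) ⊆ (Red 3 Fw).range T) :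
    (Red 3 Fw).stg S := by
  refine ⟨hcf, ?_⟩
  rintro ⟨T, hT, hsub⟩
  exact noFull T hT (hmiss T hT hsub)

lemma stg01 : (Red 3 Fw).stg {0, 1} := by
  refine ⟨cf01, ?_⟩
  rintro ⟨T, hT, hsub⟩
  refine noFull T hT ?_
  intro x hx
  rw [range01] at hsub
  rcases hsub with ⟨hsubset, hne⟩
  simp only [Set.mem_insert_iff, Set.mem_singleton_iff] at hx
  rcases hx with rfl | rfl | rfl | rfl
  · exact hsubset (by norm_num)
  · exact hsubset (by norm_num)
  · exact hsubset (by norm_num)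
  · -- 3 ∈ range T: since range T ⊆ {0,1,2,3}, strictness forces 3 ∈ range T
    by_contra h3
    apply hne
    intro y hy
    have := range_sub T hT hy
    simp only [Set.mem_insert_iff, Set.mem_singleton_iff] at this ⊢
    rcases this with rfl | rfl | rfl | rfl
    · tauto
    · tauto
    · tauto
    · exact absurd hy h3

lemma stg13 : (Red 3 Fw).stg {1, 3} := by
  refine ⟨cf13, ?_⟩
  rintro ⟨T, hT, hsub⟩
  refine noFull T hT ?_
  intro x hx
  rw [range13] at hsub
  rcases hsub with ⟨hsubset, hne⟩
  simp only [Set.mem_insert_iff, Set.mem_singleton_iff] at hx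
  rcases hx with rfl | rfl | rfl | rfl
  · exact hsubset (by norm_num)
  · exact hsubset (by norm_num)
  · by_contra h2
    apply hne
    intro y hy
    have := range_sub T hT hy
    simp only [Set.mem_insert_iff, Set.mem_singleton_iff] at this ⊢
    rcases this with rfl | rfl | rfl | rfl
    · tauto
    · tauto
    · exact absurd hy h2
    · tauto
  · exact hsubset (by norm_num)

lemma stg2 : (Red 3 Fw).stg {2} := by
  refine ⟨cf2, ?_⟩
  rintro ⟨T, hT, hsub⟩
  refine noFull T hT ?_
  intro x hx
  rw [range2] at hsub
  rcases hsub with ⟨hsubset, hne⟩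
  simp only [Set.mem_insert_iff, Set.mem_singleton_iff] at hx
  rcases hx with rfl | rfl | rfl | rfl
  · by_contra h0
    apply hne
    intro y hy
    have := range_sub T hT hy
    simp only [Set.mem_insert_iff, Set.mem_singleton_iff] at this ⊢
    rcases this with rfl | rfl | rfl | rfl
    · exact absurd hy h0
    · tauto
    · tauto
    · tauto
  · exact hsubset (by norm_num)
  · exact hsubset (by norm_num)
  · exact hsubset (by norm_num)

lemma claim01 : Fw.claim '' ({0, 1} : Set ℕ) = {0} := by
  ext x
  simp only [Set.mem_image, Set.mem_insert_iff, Set.mem_singleton_iff]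
  constructor
  · rintro ⟨a, (rfl | rfl), rfl⟩ <;> rfl
  · rintro rfl; exact ⟨0, Or.inl rfl, rfl⟩

lemma claim13 : Fw.claim '' ({1, 3} : Set ℕ) = {0, 2} := by
  ext x
  simp only [Set.mem_image, Set.mem_insert_iff, Set.mem_singleton_iff]
  constructor
  · rintro ⟨a, (rfl | rfl), rfl⟩
    · exact Or.inl rfl
    · exact Or.inr rfl
  · rintro (rfl | rfl)
    · exact ⟨1, Or.inl rfl, rfl⟩
    · exact ⟨3, Or.inr rfl, rfl⟩

lemma claim2 : Fw.claim '' ({2} : Set ℕ) = {1} := by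
  ext x
  simp only [Set.mem_image, Set.mem_singleton_iff]
  constructor
  · rintro ⟨a, rfl, rfl⟩; rfl
  · rintro rfl; exact ⟨2, rfl, rfl⟩

/-- Every stage extension of the reduced CAF is one of the three. -/
lemma stg_eq (S : Set ℕ) (hS : (Red 3 Fw).stg S) :
    S = {0, 1} ∨ S = {1, 3} ∨ S = {2} := by
  obtain ⟨⟨hsub, hcf⟩, hmax⟩ := hS
  have hmem : ∀ x ∈ S, x = 0 ∨ x = 1 ∨ x = 2 ∨ x = 3 := by
    intro x hx
    have := hsub hx
    rwa [Finset.mem_coe, mem_args_iff] at this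
  by_cases h2 : 2 ∈ S
  · -- S = {2}
    right; right
    ext x
    simp only [Set.mem_singleton_iff]
    constructor
    · intro hx
      rcases hmem x hx with rfl | rfl | rfl | rfl
      · exact absurd ((G_att_iff 0 2).2 (by norm_num)) (hcf 0 hx 2 h2)
      · exact absurd ((G_att_iff 2 1).2 (by norm_num)) (hcf 2 h2 1 hx)
      · rfl
      · exact absurd ((G_att_iff 2 3).2 (by norm_num)) (hcf 2 h2 3 hx)
    · rintro rfl; exact h2
  · by_cases h0 : 0 ∈ S
    · have h3 : 3 ∉ S := fun h => (hcf 3 h 0 h0) ((G_att_iff 3 0).2 (by norm_num))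
      by_cases h1 : 1 ∈ S
      · left
        ext x
        simp only [Set.mem_insert_iff, Set.mem_singleton_iff]
        constructor
        · intro hx
          rcases hmem x hx with rfl | rfl | rfl | rfl
          · exact Or.inl rfl
          · exact Or.inr rfl
          · exact absurd hx h2
          · exact absurd hx h3
        · rintro (rfl | rfl) <;> assumption
      · -- S = {0}: not range-maximal, beaten by {0,1}
        exfalso
        have hS0 : S = {0} := by
          ext x
          simp only [Set.mem_singleton_iff]
          constructor
          · intro hx
            rcases hmem x hx with rfl | rfl | rfl | rfl
            · rfl
            · exact absurd hx h1
            · exact absurd hx h2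
            · exact absurd hx h3
          · rintro rfl; exact h0
        apply hmax
        refine ⟨{0, 1}, cf01, ?_⟩
        rw [hS0, range0, range01]
        constructor
        · intro y hy
          simp only [Set.mem_insert_iff, Set.mem_singleton_iff] at hy ⊢
          omega
        · intro h
          have := h (show (1:ℕ) ∈ ({0,1,2}:Set ℕ) by norm_num)
          simp only [Set.mem_insert_iff, Set.mem_singleton_iff] at this
          omega
    · by_cases h3 : 3 ∈ S
      · by_cases h1 : 1 ∈ S
        · right; left
          ext x
          simp only [Set.mem_insert_iff, Set.mem_singleton_iff]
          constructor
          · intro hx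
            rcases hmem x hx with rfl | rfl | rfl | rfl
            · exact absurd hx h0
            · exact Or.inl rfl
            · exact absurd hx h2
            · exact Or.inr rfl
          · rintro (rfl | rfl) <;> assumption
        · exfalso
          have hS3 : S = {3} := by
            ext x
            simp only [Set.mem_singleton_iff]
            constructor
            · intro hx
              rcases hmem x hx with rfl | rfl | rfl | rfl
              · exact absurd hx h0
              · exact absurd hx h1
              · exact absurd hx h2
              · rfl
            · rintro rfl; exact h3
          apply hmax
          refine ⟨{1, 3}, cf13, ?_⟩
          rw [hS3, range3, range13]
          constructor
          · intro y hy
            simp only [Set.mem_insert_iff, Set.mem_singleton_iff] at hy ⊢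
            omega
          · intro h
            have := h (show (1:ℕ) ∈ ({0,1,3}:Set ℕ) by norm_num)
            simp only [Set.mem_insert_iff, Set.mem_singleton_iff] at this
            omega
      · by_cases h1 : 1 ∈ S
        · exfalso
          have hS1 : S = {1} := by
            ext x
            simp only [Set.mem_singleton_iff]
            constructor
            · intro hx
              rcases hmem x hx with rfl | rfl | rfl | rfl
              · exact absurd hx h0
              · rfl
              · exact absurd hx h2
              · exact absurd hx h3
            · rintro rfl; exact h1
          apply hmax
          refine ⟨{0, 1}, cf01, ?_⟩
          rw [hS1, range1, range01]
          constructor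
          · intro y hy
            simp only [Set.mem_insert_iff, Set.mem_singleton_iff] at hy ⊢
            omega
          · intro h
            have := h (show (0:ℕ) ∈ ({0,1,2}:Set ℕ) by norm_num)
            simp only [Set.mem_singleton_iff] at this
            omega
        · exfalso
          have hSe : S = ∅ := by
            ext x
            simp only [Set.mem_empty_iff_false, iff_false]
            intro hx
            rcases hmem x hx with rfl | rfl | rfl | rfl <;> tauto
          apply hmax
          refine ⟨{0, 1}, cf01, ?_⟩
          rw [hSe, rangeEmpty, range01]
          exact (Set.empty_ssubset).2 ⟨0, by norm_num⟩

lemma prefSem_eq :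
    prefSem CAF.stg 3 Fw = ({{0}, {0, 2}, {1}} : Set (Set ℕ)) := by
  ext C
  simp only [prefSem, CAF.claimSem, Set.mem_setOf_eq, Set.mem_insert_iff,
    Set.mem_singleton_iff]
  constructor
  · rintro ⟨S, hS, rfl⟩
    rcases stg_eq S hS with rfl | rfl | rfl
    · exact Or.inl claim01
    · exact Or.inr (Or.inl claim13)
    · exact Or.inr (Or.inr claim2)
  · rintro (rfl | rfl | rfl)
    · exact ⟨{0, 1}, stg01, claim01⟩
    · exact ⟨{1, 3}, stg13, claim13⟩
    · exact ⟨{2}, stg2, claim2⟩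

/-- `stg_p^3` is not I-maximal for PCAFs, even for transitive preferences.
This is witnessed by the PCAF with arguments `a = 0`, `a' = 1`, `b = 2`, `c = 3`,
claims `α = 0` (for `a` and `a'`), `β = 1` (for `b`), `γ = 2` (for `c`),
attacks `{(a,b),(b,c),(c,a),(a',b),(b,a')}` and preference `b ≻ a'`,
for which `stg_p^3(F') = {{α}, {α,γ}, {β}}`. -/
theorem stmt_11 :
    (∃ F : PCAF, Transitive F.pref ∧
      ∃ S T : Set ℕ, S ∈ prefSem CAF.stg 3 F ∧ T ∈ prefSem CAF.stg 3 F ∧ S ⊂ T) ∧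
    (∃ F : PCAF, Transitive F.pref ∧
      F.args = ({0, 1, 2, 3} : Finset ℕ) ∧
      F.att = ({(0, 2), (2, 3), (3, 0), (1, 2), (2, 1)} : Set (ℕ × ℕ)) ∧
      F.claim 0 = 0 ∧ F.claim 1 = 0 ∧ F.claim 2 = 1 ∧ F.claim 3 = 2 ∧
      (∀ x y : ℕ, F.pref x y ↔ (x = 2 ∧ y = 1)) ∧
      prefSem CAF.stg 3 F = ({{0}, {0, 2}, {1}} : Set (Set ℕ)) ∧
      ∃ S T : Set ℕ, S ∈ prefSem CAF.stg 3 F ∧ T ∈ prefSem CAF.stg 3 F ∧ S ⊂ T) := by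
  have hST : ∃ S T : Set ℕ, S ∈ prefSem CAF.stg 3 Fw ∧ T ∈ prefSem CAF.stg 3 Fw ∧ S ⊂ T := by
    refine ⟨{0}, {0, 2}, ?_, ?_, ?_⟩
    · rw [prefSem_eq]; exact Or.inl rfl
    · rw [prefSem_eq]; exact Or.inr (Or.inl rfl)
    · constructor
      · intro x hx
        simp only [Set.mem_singleton_iff] at hx
        simp [hx]
      · intro h
        have := h (show (2:ℕ) ∈ ({0,2}:Set ℕ) by norm_num)
        simp only [Set.mem_singleton_iff] at this
        omega
  refine ⟨⟨Fw, Fw_trans, hST⟩, Fw, Fw_trans, rfl, rfl, rfl, rfl, rfl, rfl, Fw_pref,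
    prefSem_eq, hST⟩
end
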